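/- arXiv:2505.21229 — 2 statements merged into one kernel-verified Lean document; each statement's English description precedes it below -/
import Mathlib

section
/- With I(G,K) the CA-ML instance constructed from a bipartite graph G and integer K as described (the exact-maximal-matching construction), G has a maximal matching of size exactly K if and only if I(G,K) admits a student-complete pair-size-stable matching, and likewise if and only if I(G,K) admits a course-complete pair-size-stable matching. -/
open Finset

/-- An instance of the Course Allocation problem: students `S`, courses `C`,
mutual acceptability `acc`, strict preferences of students over (acceptable) courses
and of courses over (acceptable) students, positive credits, upper quotas and credit limits. -/
structure CA (S C : Type*) where
  acc : S → C → Prop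
  sPref : S → C → C → Prop
  cPref : C → S → S → Prop
  credits : C → ℚ
  quota : C → ℕ
  limit : S → ℚ
  credits_pos : ∀ c, 0 < credits c
  sPref_irrefl : ∀ s c, ¬ sPref s c c
  sPref_trans : ∀ s c₁ c₂ c₃, sPref s c₁ c₂ → sPref s c₂ c₃ → sPref s c₁ c₃
  sPref_total : ∀ s c₁ c₂, acc s c₁ → acc s c₂ → c₁ ≠ c₂ → sPref s c₁ c₂ ∨ sPref s c₂ c₁
  cPref_irrefl : ∀ c s, ¬ cPref c s s
  cPref_trans : ∀ c s₁ s₂ s₃, cPref c s₁ s₂ → cPref c s₂ s₃ → cPref c s₁ s₃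
  cPref_total : ∀ c s₁ s₂, acc s₁ c → acc s₂ c → s₁ ≠ s₂ → cPref c s₁ s₂ ∨ cPref c s₂ s₁

section CourseAllocation

variable {S C : Type*} [DecidableEq S] [DecidableEq C]

/-- The set `C_M(s)` of courses assigned to student `s` in assignment `M`. -/
def CM (M : Finset (S × C)) (s : S) : Finset C :=
  (M.filter fun p => p.1 = s).image Prod.snd

/-- The set `S_M(c)` of students assigned to course `c` in assignment `M`. -/
def SM (M : Finset (S × C)) (c : C) : Finset S :=
  (M.filter fun p => p.2 = c).image Prod.fst

/-- The total number of credits `O(D)` of a set of courses `D`. -/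
def CA.O (I : CA S C) (D : Finset C) : ℚ := ∑ c ∈ D, I.credits c

/-- `M` is a matching: all pairs acceptable, credit limits and upper quotas respected. -/
def CA.IsMatching (I : CA S C) (M : Finset (S × C)) : Prop :=
  (∀ p ∈ M, I.acc p.1 p.2) ∧
  (∀ s, I.O (CM M s) ≤ I.limit s) ∧
  (∀ c, (SM M c).card ≤ I.quota c)

/-- Feasibility of a matching with respect to families `F` of feasible course sets. -/
def Feasible (F : S → Set (Finset C)) (M : Finset (S × C)) : Prop :=
  ∀ s, CM M s ∈ F s

/-- `F` is a family of downward-feasible constraints: every feasible set consists of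
acceptable courses, and subsets of feasible sets are feasible. -/
def CA.DownwardFeasible (I : CA S C) (F : S → Set (Finset C)) : Prop :=
  (∀ s, ∀ D ∈ F s, ∀ c ∈ D, I.acc s c) ∧
  (∀ s, ∀ D ∈ F s, ∀ D' ⊆ D, D' ∈ F s)

/-- Absent downward-feasible constraints (every set of courses feasible). -/
def noF : S → Set (Finset C) := fun _ => Set.univ

/-- Condition (1) of all blocking definitions: course `c` is undersubscribed in `M`
or prefers `s` to one of its assigned students. -/
def CA.Wants (I : CA S C) (M : Finset (S × C)) (s : S) (c : C) : Prop :=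
  (SM M c).card < I.quota c ∨ ∃ s' ∈ SM M c, I.cPref c s s'

/-- `(s, c)` is a blocking pair of `M` (w.r.t. feasibility constraints `F`). -/
def CA.BlockingPair (I : CA S C) (F : S → Set (Finset C)) (M : Finset (S × C))
    (s : S) (c : C) : Prop :=
  I.acc s c ∧ (s, c) ∉ M ∧ I.Wants M s c ∧
  ∃ D ⊆ CM M s, (∀ c' ∈ D, I.sPref s c c') ∧
    I.O (CM M s) - I.O D + I.credits c ≤ I.limit s ∧
    (CM M s \ D) ∪ {c} ∈ F s

def CA.PairStable (I : CA S C) (F : S → Set (Finset C)) (M : Finset (S × C)) : Prop :=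
  ∀ s c, ¬ I.BlockingPair F M s c

/-- `(s, c)` is a size-blocking pair of `M`: like a blocking pair, but additionally
the dropped set `D` must satisfy `O(D) ≤ O(c)`. -/
def CA.SizeBlockingPair (I : CA S C) (F : S → Set (Finset C)) (M : Finset (S × C))
    (s : S) (c : C) : Prop :=
  I.acc s c ∧ (s, c) ∉ M ∧ I.Wants M s c ∧
  ∃ D ⊆ CM M s, (∀ c' ∈ D, I.sPref s c c') ∧ I.O D ≤ I.credits c ∧
    I.O (CM M s) - I.O D + I.credits c ≤ I.limit s ∧
    (CM M s \ D) ∪ {c} ∈ F s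

def CA.PairSizeStable (I : CA S C) (F : S → Set (Finset C)) (M : Finset (S × C)) : Prop :=
  ∀ s c, ¬ I.SizeBlockingPair F M s c

/-- `(s, B)` is a blocking coalition of `M`. -/
def CA.BlockingCoalition (I : CA S C) (F : S → Set (Finset C)) (M : Finset (S × C))
    (s : S) (B : Finset C) : Prop :=
  B.Nonempty ∧ (∀ c ∈ B, I.acc s c ∧ (s, c) ∉ M) ∧ (∀ c ∈ B, I.Wants M s c) ∧
  ∃ D ⊆ CM M s, (∀ c ∈ B, ∀ c' ∈ D, I.sPref s c c') ∧ I.O D ≤ I.O B ∧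
    I.O (CM M s) - I.O D + I.O B ≤ I.limit s ∧
    (CM M s \ D) ∪ B ∈ F s

def CA.CoalitionStable (I : CA S C) (F : S → Set (Finset C)) (M : Finset (S × C)) : Prop :=
  ∀ s B, ¬ I.BlockingCoalition F M s B

/-- `(s, B)` is a first-blocking coalition of `M`: as a blocking coalition, except that
`s` need only prefer her most-preferred course of `B` to her most-preferred course of `D`
(equivalently, some course of `B` is preferred to every course of `D`; vacuous if `D = ∅`). -/
def CA.FirstBlockingCoalition (I : CA S C) (F : S → Set (Finset C)) (M : Finset (S × C))
    (s : S) (B : Finset C) : Prop :=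
  B.Nonempty ∧ (∀ c ∈ B, I.acc s c ∧ (s, c) ∉ M) ∧ (∀ c ∈ B, I.Wants M s c) ∧
  ∃ D ⊆ CM M s, (∃ b ∈ B, ∀ c' ∈ D, I.sPref s b c') ∧ I.O D ≤ I.O B ∧
    I.O (CM M s) - I.O D + I.O B ≤ I.limit s ∧
    (CM M s \ D) ∪ B ∈ F s

def CA.FirstCoalitionStable (I : CA S C) (F : S → Set (Finset C)) (M : Finset (S × C)) : Prop :=
  ∀ s B, ¬ I.FirstBlockingCoalition F M s B

/-- Every course exactly fills its upper quota. -/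
def CA.CourseComplete (I : CA S C) (M : Finset (S × C)) : Prop :=
  ∀ c, (SM M c).card = I.quota c

/-- Every student takes as many credits as her credit limit. -/
def CA.StudentComplete (I : CA S C) (M : Finset (S × C)) : Prop :=
  ∀ s, I.O (CM M s) = I.limit s

/-- The size of a matching: total number of credits taken by all students. -/
def CA.size [Fintype S] (I : CA S C) (M : Finset (S × C)) : ℚ :=
  ∑ s : S, I.O (CM M s)

/-- `ml` is a master list of students for the instance `I`: a strict total order on
students with which every course's preferences are consistent. -/
def CA.MasterList (I : CA S C) (ml : S → S → Prop) : Prop :=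
  (∀ s, ¬ ml s s) ∧ (∀ s₁ s₂ s₃, ml s₁ s₂ → ml s₂ s₃ → ml s₁ s₃) ∧
  (∀ s₁ s₂, s₁ ≠ s₂ → ml s₁ s₂ ∨ ml s₂ s₁) ∧
  (∀ c s s', I.acc s c → I.acc s' c → (I.cPref c s s' ↔ ml s s'))

end CourseAllocation
/-- Builds a `CA` instance from rank functions (smaller rank = more preferred), with a fixed
injective tie-breaking that never fires when ranks are distinct on acceptable pairs. -/
def CA.ofRanks {S C : Type*} (acc : S → C → Prop) (srank : S → C → ℕ) (crank : C → S → ℕ)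
    (iS : S → ℕ) (iC : C → ℕ) (hiS : Function.Injective iS) (hiC : Function.Injective iC)
    (credits : C → ℚ) (quota : C → ℕ) (limit : S → ℚ) (hpos : ∀ c, 0 < credits c) :
    CA S C where
  acc := acc
  sPref s c c' := acc s c ∧ acc s c' ∧
    (srank s c < srank s c' ∨ (srank s c = srank s c' ∧ iC c < iC c'))
  cPref c s s' := acc s c ∧ acc s' c ∧
    (crank c s < crank c s' ∨ (crank c s = crank c s' ∧ iS s < iS s'))
  credits := credits
  quota := quota
  limit := limit
  credits_pos := hpos
  sPref_irrefl := by rintro s c ⟨-, -, h⟩; omega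
  sPref_trans := by rintro s c₁ c₂ c₃ ⟨h1, -, ha⟩ ⟨-, h2, hb⟩; exact ⟨h1, h2, by omega⟩
  sPref_total := by
    intro s c₁ c₂ h1 h2 hne
    have hi : iC c₁ ≠ iC c₂ := fun h => hne (hiC h)
    rcases Nat.lt_trichotomy (srank s c₁) (srank s c₂) with h | h | h
    · exact Or.inl ⟨h1, h2, Or.inl h⟩
    · rcases Nat.lt_or_ge (iC c₁) (iC c₂) with h' | h'
      · exact Or.inl ⟨h1, h2, Or.inr ⟨h, h'⟩⟩
      · exact Or.inr ⟨h2, h1, Or.inr ⟨h.symm, by omega⟩⟩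
    · exact Or.inr ⟨h2, h1, Or.inl h⟩
  cPref_irrefl := by rintro c s ⟨-, -, h⟩; omega
  cPref_trans := by rintro c s₁ s₂ s₃ ⟨h1, -, ha⟩ ⟨-, h2, hb⟩; exact ⟨h1, h2, by omega⟩
  cPref_total := by
    intro c s₁ s₂ h1 h2 hne
    have hi : iS s₁ ≠ iS s₂ := fun h => hne (hiS h)
    rcases Nat.lt_trichotomy (crank c s₁) (crank c s₂) with h | h | h
    · exact Or.inl ⟨h1, h2, Or.inl h⟩
    · rcases Nat.lt_or_ge (iS s₁) (iS s₂) with h' | h'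
      · exact Or.inl ⟨h1, h2, Or.inr ⟨h, h'⟩⟩
      · exact Or.inr ⟨h2, h1, Or.inr ⟨h.symm, by omega⟩⟩
    · exact Or.inr ⟨h2, h1, Or.inl h⟩
/-- A matching in the bipartite graph `G = (U, W, E)` where `U = Fin n1`, `W = Fin n2`
and each `w_i ∈ W` has exactly the two neighbours `nb1 i` and `nb2 i`: `f i` is the
`U`-vertex matched to `w_i` (if any); edges must exist and be pairwise disjoint. -/
def GMatching {n1 n2 : ℕ} (nb1 nb2 : Fin n2 → Fin n1)
    (f : Fin n2 → Option (Fin n1)) : Prop :=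
  (∀ i j, f i = some j → j = nb1 i ∨ j = nb2 i) ∧
  ∀ i i' j, f i = some j → f i' = some j → i = i'

/-- `f` is a maximal matching of `G`: no edge can be added, i.e. every unmatched
`w_i` has both of its neighbours matched. -/
def GMaximal {n1 n2 : ℕ} (nb1 nb2 : Fin n2 → Fin n1)
    (f : Fin n2 → Option (Fin n1)) : Prop :=
  GMatching nb1 nb2 f ∧
  ∀ i, f i = none → ∀ j, (j = nb1 i ∨ j = nb2 i) → ∃ i', f i' = some j

/-- The size (number of edges) of the graph matching `f`. -/
def GSize {n1 n2 : ℕ} (f : Fin n2 → Option (Fin n1)) : ℕ :=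
  (Finset.univ.filter fun i => f i ≠ none).card
/-- Students of the exact-maximal-matching instance `I17(G,K)`: `Sum.inl (i, t)` is
`s_i^{t+1}` (`t : Fin 3`), and `Sum.inr k` is the student `p_{k+1}` (`k : Fin (n1-K)`). -/
abbrev S17 (n1 n2 K : ℕ) := (Fin n2 × Fin 3) ⊕ Fin (n1 - K)

/-- Courses of `I17(G,K)`: `Sum.inl (i, r)` is `d_i^{r+1}` (`r : Fin 2`),
`Sum.inr (Sum.inl j)` is `c_j`, and `Sum.inr (Sum.inr v)` is `e_1`, `e_2`, `f`
for `v = 0, 1, 2` respectively. -/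
abbrev C17 (n1 n2 : ℕ) := (Fin n2 × Fin 2) ⊕ (Fin n1 ⊕ Fin 3)

/-- Acceptability in `I17(G,K)`, following the preference lists
`s_i^1 : c_{nb1 i} ≻ d_i^1 ≻ f`, `s_i^2 : c_{nb2 i} ≻ d_i^1 ≻ d_i^2 ≻ f`,
`s_i^3 : c_{nb1 i} ≻ c_{nb2 i} ≻ d_i^2 ≻ e_1 ≻ e_2`, `p_k : c_1 ≻ ⋯ ≻ c_{n1}`. -/
def acc17 {n1 n2 K : ℕ} (nb1 nb2 : Fin n2 → Fin n1) : S17 n1 n2 K → C17 n1 n2 → Prop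
  | .inl (i, t), .inl (i', r) =>
      i = i' ∧ (if t = 0 then r = 0 else if t = 1 then True else r = 1)
  | .inl (i, t), .inr (.inl j) =>
      if t = 0 then j = nb1 i
      else if t = 1 then j = nb2 i
      else j = nb1 i ∨ j = nb2 i
  | .inl (_, t), .inr (.inr v) => if t = 2 then v = 0 ∨ v = 1 else v = 2
  | .inr _, .inr (.inl _) => True
  | .inr _, _ => False

/-- Students' preference ranks in `I17(G,K)` (smaller = more preferred). -/
def srank17 {n1 n2 K : ℕ} (nb1 nb2 : Fin n2 → Fin n1) : S17 n1 n2 K → C17 n1 n2 → ℕ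
  | .inl (_, t), .inl (_, r) => if t = 2 then 2 else if r = 0 then 1 else 2
  | .inl (i, t), .inr (.inl j) => if t = 2 then (if j = nb1 i then 0 else 1) else 0
  | .inl (_, t), .inr (.inr v) =>
      if t = 2 then (if v = 0 then 3 else 4) else if t = 0 then 2 else 3
  | .inr _, .inr (.inl j) => j.val
  | .inr _, _ => 0

/-- The position of each student in the master list of students of `I17(G,K)`:
`s_1^1, s_1^2, …, s_{n2}^1, s_{n2}^2`, then `s_1^3, …, s_{n2}^3`, then
`p_1, …, p_{n1-K}`.  All courses rank their acceptable students accordingly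
(this also realises the master list of courses). -/
def mrank17 {n1 n2 K : ℕ} : S17 n1 n2 K → ℕ
  | .inl (i, t) =>
      if t = 0 then 2 * i.val
      else if t = 1 then 2 * i.val + 1
      else 2 * n2 + i.val
  | .inr k => 3 * n2 + k.val

/-- Credits in `I17(G,K)`: `d_i^1, d_i^2` have 2 credits, all other courses 1 credit. -/
def credits17 {n1 n2 : ℕ} : C17 n1 n2 → ℚ
  | .inl _ => 2
  | .inr _ => 1

/-- Upper quotas in `I17(G,K)`: every course has upper quota 1 except `e_1, e_2`
(quota `n2 - K`) and `f` (quota `K`). -/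
def quota17 {n1 n2 : ℕ} (K : ℕ) : C17 n1 n2 → ℕ
  | .inl _ => 1
  | .inr (.inl _) => 1
  | .inr (.inr v) => if v = 2 then K else n2 - K

/-- Credit limits in `I17(G,K)`: `s_i^1, s_i^2, s_i^3` have limit 2, the `p_k` limit 1. -/
def limit17 {n1 n2 K : ℕ} : S17 n1 n2 K → ℚ
  | .inl _ => 2
  | .inr _ => 1

/-- The CA-ML instance `I17(G,K)` (exact-maximal-matching construction) built from the
bipartite graph `G` (neighbour maps `nb1, nb2` of the degree-2 side `W = Fin n2`) and `K`. -/
def I17 {n1 n2 : ℕ} (nb1 nb2 : Fin n2 → Fin n1) (K : ℕ) :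
    CA (S17 n1 n2 K) (C17 n1 n2) :=
  CA.ofRanks (acc17 nb1 nb2) (srank17 nb1 nb2) (fun _ s => mrank17 s)
    Encodable.encode Encodable.encode Encodable.encode_injective Encodable.encode_injective
    credits17 (quota17 K) limit17
    (by
      rintro (⟨i, r⟩ | c)
      · show (0 : ℚ) < 2; norm_num
      · show (0 : ℚ) < 1; norm_num)

/-! ### Auxiliary lemmas -/

section Aux

variable {S C : Type*} [DecidableEq S] [DecidableEq C]

lemma mem_CM {M : Finset (S × C)} {s : S} {c : C} :
    c ∈ CM M s ↔ (s, c) ∈ M := by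
  constructor
  · intro h
    simp only [CM, Finset.mem_image, Finset.mem_filter] at h
    obtain ⟨p, ⟨hp, h1⟩, h2⟩ := h
    rwa [← h1, ← h2]
  · intro h
    simp only [CM, Finset.mem_image, Finset.mem_filter]
    exact ⟨(s, c), ⟨h, rfl⟩, rfl⟩

lemma mem_SM {M : Finset (S × C)} {s : S} {c : C} :
    s ∈ SM M c ↔ (s, c) ∈ M := by
  constructor
  · intro h
    simp only [SM, Finset.mem_image, Finset.mem_filter] at h
    obtain ⟨p, ⟨hp, h1⟩, h2⟩ := h
    rwa [← h1, ← h2]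
  · intro h
    simp only [SM, Finset.mem_image, Finset.mem_filter]
    exact ⟨(s, c), ⟨h, rfl⟩, rfl⟩

lemma O_singleton (I : CA S C) (c : C) : I.O {c} = I.credits c := by
  simp [CA.O]

lemma O_pair (I : CA S C) {c c' : C} (h : c ≠ c') :
    I.O {c, c'} = I.credits c + I.credits c' := by
  simp [CA.O, Finset.sum_pair h]

lemma O_empty (I : CA S C) : I.O ∅ = 0 := by simp [CA.O]

lemma O_nonneg (I : CA S C) (D : Finset C) : 0 ≤ I.O D :=
  Finset.sum_nonneg fun c _ => (I.credits_pos c).le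

lemma O_mono (I : CA S C) {D D' : Finset C} (h : D ⊆ D') : I.O D ≤ I.O D' :=
  Finset.sum_le_sum_of_subset_of_nonneg h fun c _ _ => (I.credits_pos c).le

end Aux

section I17Lemmas

variable {n1 n2 : ℕ} {nb1 nb2 : Fin n2 → Fin n1} {K : ℕ}

lemma I17_acc : (I17 nb1 nb2 K).acc = acc17 nb1 nb2 := rfl

lemma I17_credits : (I17 nb1 nb2 K).credits = credits17 := rfl

lemma I17_quota : (I17 nb1 nb2 K).quota = quota17 K := rfl

lemma I17_limit : (I17 nb1 nb2 K).limit = limit17 := rfl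

lemma not_sPref_of_srank {s : S17 n1 n2 K} {c c' : C17 n1 n2}
    (h : srank17 nb1 nb2 s c' ≤ srank17 nb1 nb2 s c) (hne : srank17 nb1 nb2 s c' ≠ srank17 nb1 nb2 s c) :
    ¬ (I17 nb1 nb2 K).sPref s c c' := by
  rintro ⟨-, -, hlt | ⟨heq, -⟩⟩
  · omega
  · omega

lemma not_cPref_of_mrank {c : C17 n1 n2} {s s' : S17 n1 n2 K}
    (h : mrank17 s' < mrank17 s) : ¬ (I17 nb1 nb2 K).cPref c s s' := by
  rintro ⟨-, -, hlt | ⟨heq, -⟩⟩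
  · have hlt' : mrank17 s < mrank17 s' := hlt
    omega
  · have heq' : mrank17 s = mrank17 s' := heq
    omega

lemma cPref_of_mrank {c : C17 n1 n2} {s s' : S17 n1 n2 K}
    (h1 : acc17 nb1 nb2 s c) (h2 : acc17 nb1 nb2 s' c) (h : mrank17 s < mrank17 s') :
    (I17 nb1 nb2 K).cPref c s s' :=
  ⟨h1, h2, Or.inl h⟩

lemma sPref_of_srank {s : S17 n1 n2 K} {c c' : C17 n1 n2}
    (h1 : acc17 nb1 nb2 s c) (h2 : acc17 nb1 nb2 s c')
    (h : srank17 nb1 nb2 s c < srank17 nb1 nb2 s c') :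
    (I17 nb1 nb2 K).sPref s c c' :=
  ⟨h1, h2, Or.inl h⟩

end I17Lemmas


set_option maxRecDepth 100000

/-! ### The forward construction -/

section Forward

variable {n1 n2 K : ℕ} (nb1 : Fin n2 → Fin n1) (f : Fin n2 → Option (Fin n1))
  (g : Fin (n1 - K) → Fin n1)

/-- Membership predicate of the matching constructed from a graph matching `f`
and an assignment `g` of the `p`-students to courses. -/
def memB : S17 n1 n2 K × C17 n1 n2 → Bool
  | (.inl (i, t), .inl (i', r)) =>
      i' == i &&
      (if t = 0 then r == 0 && !(f i == some (nb1 i))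
       else if t = 1 then (if f i = none then r == 1 else r == 0 && f i == some (nb1 i))
       else r == 1 && !(f i == none))
  | (.inl (i, t), .inr (.inl j)) =>
      f i == some j && (if t = 0 then j == nb1 i else if t = 1 then !(j == nb1 i) else false)
  | (.inl (i, t), .inr (.inr v)) =>
      if t = 2 then (v == 0 || v == 1) && f i == none
      else v == 2 && (if t = 0 then f i == some (nb1 i)
                      else !(f i == none) && !(f i == some (nb1 i)))
  | (.inr k, .inr (.inl j)) => j == g k
  | (.inr _, _) => false

/-- The matching of `I17(G,K)` constructed from `f` and `g`. -/
def M17 : Finset (S17 n1 n2 K × C17 n1 n2) :=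
  univ.filter (fun p => memB nb1 f g p = true)

lemma mem_M17 {p : S17 n1 n2 K × C17 n1 n2} :
    p ∈ M17 nb1 f g ↔ memB nb1 f g p = true := by
  simp [M17]

variable {nb1 f g}

lemma CM_a0 {i : Fin n2} (hfi : f i = some (nb1 i)) :
    CM (M17 nb1 f g) (.inl (i, 0)) =
      {Sum.inr (Sum.inl (nb1 i)), Sum.inr (Sum.inr 2)} := by
  ext c
  rw [mem_CM, mem_M17]
  rcases c with ⟨i', r⟩ | j | v <;> simp [memB, hfi] <;> aesop

lemma CM_a1 {i : Fin n2} (hfi : f i = some (nb1 i)) :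
    CM (M17 nb1 f g) (.inl (i, 1)) = {Sum.inl (i, 0)} := by
  ext c
  rw [mem_CM, mem_M17]
  rcases c with ⟨i', r⟩ | j | v <;> simp [memB, hfi] <;> aesop

lemma CM_ab2 {i : Fin n2} {j : Fin n1} (hfi : f i = some j) :
    CM (M17 nb1 f g) (.inl (i, 2)) = {Sum.inl (i, 1)} := by
  ext c
  rw [mem_CM, mem_M17]
  rcases c with ⟨i', r⟩ | j' | v <;> simp [memB, hfi] <;> aesop

lemma CM_b0 {i : Fin n2} {j : Fin n1} (hfi : f i = some j) (hj : j ≠ nb1 i) :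
    CM (M17 nb1 f g) (.inl (i, 0)) = {Sum.inl (i, 0)} := by
  ext c
  rw [mem_CM, mem_M17]
  rcases c with ⟨i', r⟩ | j' | v <;> simp [memB, hfi, hj] <;> aesop

lemma CM_b1 {i : Fin n2} {j : Fin n1} (hfi : f i = some j) (hj : j ≠ nb1 i) :
    CM (M17 nb1 f g) (.inl (i, 1)) =
      {Sum.inr (Sum.inl j), Sum.inr (Sum.inr 2)} := by
  ext c
  rw [mem_CM, mem_M17]
  rcases c with ⟨i', r⟩ | j' | v <;> simp [memB, hfi, hj] <;> aesop

lemma CM_n0 {i : Fin n2} (hfi : f i = none) :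
    CM (M17 nb1 f g) (.inl (i, 0)) = {Sum.inl (i, 0)} := by
  ext c
  rw [mem_CM, mem_M17]
  rcases c with ⟨i', r⟩ | j' | v <;> simp [memB, hfi] <;> aesop

lemma CM_n1 {i : Fin n2} (hfi : f i = none) :
    CM (M17 nb1 f g) (.inl (i, 1)) = {Sum.inl (i, 1)} := by
  ext c
  rw [mem_CM, mem_M17]
  rcases c with ⟨i', r⟩ | j' | v <;> simp [memB, hfi] <;> aesop

lemma CM_n2 {i : Fin n2} (hfi : f i = none) :
    CM (M17 nb1 f g) (.inl (i, 2)) =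
      {Sum.inr (Sum.inr 0), Sum.inr (Sum.inr 1)} := by
  ext c
  rw [mem_CM, mem_M17]
  rcases c with ⟨i', r⟩ | j' | v <;> simp [memB, hfi] <;> aesop

lemma CM_p (k : Fin (n1 - K)) :
    CM (M17 nb1 f g) (.inr k) = {Sum.inr (Sum.inl (g k))} := by
  ext c
  rw [mem_CM, mem_M17]
  rcases c with ⟨i', r⟩ | j' | v <;> simp [memB] <;> aesop

end Forward


section ForwardSM

variable {n1 n2 K : ℕ} {nb1 : Fin n2 → Fin n1} {f : Fin n2 → Option (Fin n1)}
  {g : Fin (n1 - K) → Fin n1}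

lemma SM_d1_a {i : Fin n2} (hfi : f i = some (nb1 i)) :
    SM (M17 nb1 f g) (.inl (i, 0)) = {Sum.inl (i, 1)} := by
  ext s
  rw [mem_SM, mem_M17]
  rcases s with ⟨i', t⟩ | k
  · fin_cases t <;> by_cases hii : i' = i <;> subst_vars <;> simp [memB, hfi] <;> aesop
  · simp [memB]

lemma SM_d1_b {i : Fin n2} {j : Fin n1} (hfi : f i = some j) (hj : j ≠ nb1 i) :
    SM (M17 nb1 f g) (.inl (i, 0)) = {Sum.inl (i, 0)} := by
  ext s
  rw [mem_SM, mem_M17]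
  rcases s with ⟨i', t⟩ | k
  · fin_cases t <;> by_cases hii : i' = i <;> subst_vars <;> simp [memB, hfi, hj] <;> aesop
  · simp [memB]

lemma SM_d1_n {i : Fin n2} (hfi : f i = none) :
    SM (M17 nb1 f g) (.inl (i, 0)) = {Sum.inl (i, 0)} := by
  ext s
  rw [mem_SM, mem_M17]
  rcases s with ⟨i', t⟩ | k
  · fin_cases t <;> by_cases hii : i' = i <;> subst_vars <;> simp [memB, hfi] <;> aesop
  · simp [memB]

lemma SM_d2_ab {i : Fin n2} {j : Fin n1} (hfi : f i = some j) :
    SM (M17 nb1 f g) (.inl (i, 1)) = {Sum.inl (i, 2)} := by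
  ext s
  rw [mem_SM, mem_M17]
  rcases s with ⟨i', t⟩ | k
  · fin_cases t <;> by_cases hii : i' = i <;> subst_vars <;> simp [memB, hfi] <;> aesop
  · simp [memB]

lemma SM_d2_n {i : Fin n2} (hfi : f i = none) :
    SM (M17 nb1 f g) (.inl (i, 1)) = {Sum.inl (i, 1)} := by
  ext s
  rw [mem_SM, mem_M17]
  rcases s with ⟨i', t⟩ | k
  · fin_cases t <;> by_cases hii : i' = i <;> subst_vars <;> simp [memB, hfi] <;> aesop
  · simp [memB]

lemma SM_c_a (hgf : ∀ k i, f i ≠ some (g k))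
    (hinj : ∀ i i' j, f i = some j → f i' = some j → i = i')
    {i : Fin n2} (hfi : f i = some (nb1 i)) :
    SM (M17 nb1 f g) (.inr (.inl (nb1 i))) = {Sum.inl (i, 0)} := by
  ext s
  rw [mem_SM, mem_M17]
  rcases s with ⟨i', t⟩ | k
  · constructor
    · intro h
      fin_cases t <;> simp [memB] at h ⊢
      · exact hinj _ _ _ h.1 hfi
      · obtain ⟨h1, h2⟩ := h
        have h3 := hinj _ _ _ h1 hfi
        subst h3
        exact h2 rfl
    · intro h
      simp at h
      obtain ⟨rfl, rfl⟩ := h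
      simp [memB, hfi]
  · simp [memB]
    intro h
    exact hgf k i (h ▸ hfi)

lemma SM_c_b (hgf : ∀ k i, f i ≠ some (g k))
    (hinj : ∀ i i' j, f i = some j → f i' = some j → i = i')
    {i : Fin n2} {j : Fin n1} (hfi : f i = some j) (hj : j ≠ nb1 i) :
    SM (M17 nb1 f g) (.inr (.inl j)) = {Sum.inl (i, 1)} := by
  ext s
  rw [mem_SM, mem_M17]
  rcases s with ⟨i', t⟩ | k
  · constructor
    · intro h
      fin_cases t <;> simp [memB] at h ⊢
      · obtain ⟨h1, h2⟩ := h
        have h3 := hinj _ _ _ h1 hfi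
        subst h3
        exact hj h2
      · exact hinj _ _ _ h.1 hfi
    · intro h
      simp at h
      obtain ⟨rfl, rfl⟩ := h
      simp [memB, hfi, hj]
  · simp [memB]
    intro h
    exact hgf k i (h ▸ hfi)

lemma SM_c_un {j : Fin n1} (hj : ∀ i, f i ≠ some j) {k : Fin (n1 - K)}
    (hk : g k = j) (hginj : Function.Injective g) :
    SM (M17 nb1 f g) (.inr (.inl j)) = {Sum.inr k} := by
  ext s
  rw [mem_SM, mem_M17]
  rcases s with ⟨i', t⟩ | k'
  · fin_cases t <;> simp [memB] <;> intro h <;> exact absurd h (hj i')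
  · simp [memB]
    constructor
    · intro h
      exact (hginj (hk.trans h)).symm
    · rintro rfl
      exact hk.symm

lemma SM_e1 :
    SM (M17 nb1 f g) (.inr (.inr 0)) =
      (univ.filter (fun i => f i = none)).image (fun i => (Sum.inl (i, 2) : S17 n1 n2 K)) := by
  ext s
  rw [mem_SM, mem_M17]
  rcases s with ⟨i', t⟩ | k
  · fin_cases t <;> simp [memB] <;> aesop
  · simp [memB]

lemma SM_e2 :
    SM (M17 nb1 f g) (.inr (.inr 1)) =
      (univ.filter (fun i => f i = none)).image (fun i => (Sum.inl (i, 2) : S17 n1 n2 K)) := by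
  ext s
  rw [mem_SM, mem_M17]
  rcases s with ⟨i', t⟩ | k
  · fin_cases t <;> simp [memB] <;> aesop
  · simp [memB]

lemma SM_f :
    SM (M17 nb1 f g) (.inr (.inr 2)) =
      (univ.filter (fun i => f i ≠ none)).image
        (fun i => (Sum.inl (i, if f i = some (nb1 i) then (0 : Fin 3) else 1) : S17 n1 n2 K)) := by
  ext s
  rw [mem_SM, mem_M17]
  rcases s with ⟨i', t⟩ | k
  · fin_cases t <;> simp [memB] <;> aesop <;> simp_all [Option.isSome_iff_ne_none]
  · simp [memB]

end ForwardSM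


lemma fin3cases {P : Fin 3 → Prop} (t : Fin 3) (h0 : P 0) (h1 : P 1) (h2 : P 2) : P t := by
  fin_cases t
  · exact h0
  · exact h1
  · exact h2

lemma fin2cases {P : Fin 2 → Prop} (r : Fin 2) (h0 : P 0) (h1 : P 1) : P r := by
  fin_cases r
  · exact h0
  · exact h1

section ForwardCount

variable {n1 n2 K : ℕ} {nb1 nb2 : Fin n2 → Fin n1}

/-- The matched `U`-vertices of the graph matching `f`. -/
def matchedC (f : Fin n2 → Option (Fin n1)) : Finset (Fin n1) :=
  univ.filter (fun j => ∃ i, f i = some j)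

/-- The unmatched `U`-vertices. -/
def unmatchedC (f : Fin n2 → Option (Fin n1)) : Finset (Fin n1) :=
  univ \ matchedC f

lemma card_matchedC {f : Fin n2 → Option (Fin n1)} {K : ℕ}
    (hinj : ∀ i i' j, f i = some j → f i' = some j → i = i') (hs : GSize f = K) :
    (matchedC f).card = K := by
  rw [← hs, GSize]
  symm
  apply Finset.card_bij (fun i hi => Option.get (f i)
    (Option.isSome_iff_ne_none.2 (by simpa using (Finset.mem_filter.1 hi).2)))
  · intro a ha
    simp only [matchedC, Finset.mem_filter, Finset.mem_univ, true_and]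
    exact ⟨a, (Option.some_get _).symm⟩
  · intro a ha a' ha' h
    obtain ⟨j, hj⟩ := Option.isSome_iff_exists.1 (Option.isSome_iff_ne_none.2
      (by simpa using (Finset.mem_filter.1 ha).2))
    obtain ⟨j', hj'⟩ := Option.isSome_iff_exists.1 (Option.isSome_iff_ne_none.2
      (by simpa using (Finset.mem_filter.1 ha').2))
    simp only [hj, hj', Option.get_some] at h
    exact hinj _ _ _ hj (h ▸ hj')
  · intro j hj
    obtain ⟨i, hfi⟩ := (Finset.mem_filter.1 hj).2
    refine ⟨i, Finset.mem_filter.2 ⟨Finset.mem_univ _, by simp [hfi]⟩, ?_⟩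
    simp [hfi]

lemma card_unmatchedC {f : Fin n2 → Option (Fin n1)} {K : ℕ}
    (hinj : ∀ i i' j, f i = some j → f i' = some j → i = i') (hs : GSize f = K) :
    (unmatchedC f).card = n1 - K := by
  rw [unmatchedC, Finset.card_sdiff_of_subset (Finset.subset_univ _), Finset.card_univ,
    Fintype.card_fin, card_matchedC hinj hs]

lemma card_filter_none {f : Fin n2 → Option (Fin n1)} {K : ℕ} (hs : GSize f = K)
    (hK2 : K ≤ n2) :
    (univ.filter (fun i => f i = none)).card = n2 - K := by
  have e : (univ.filter (fun i => f i = none)) = (univ.filter (fun i => ¬ f i ≠ none)) := by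
    apply Finset.filter_congr
    intro i _
    simp
  rw [e]
  have h := Finset.card_filter_add_card_filter_not
    (s := (univ : Finset (Fin n2))) (p := fun i => f i ≠ none)
  rw [Finset.card_univ, Fintype.card_fin] at h
  rw [GSize] at hs
  omega

/-- The order-preserving assignment of `p`-students to unmatched `c`-courses. -/
noncomputable def pAssign (f : Fin n2 → Option (Fin n1)) {K : ℕ}
    (h : (unmatchedC f).card = n1 - K) : Fin (n1 - K) → Fin n1 :=
  fun k => ((unmatchedC f).orderIsoOfFin h k : Fin n1)

lemma pAssign_mem {f : Fin n2 → Option (Fin n1)} {K : ℕ}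
    (h : (unmatchedC f).card = n1 - K) (k : Fin (n1 - K)) :
    pAssign f h k ∈ unmatchedC f :=
  ((unmatchedC f).orderIsoOfFin h k).2

lemma pAssign_not_matched {f : Fin n2 → Option (Fin n1)} {K : ℕ}
    (h : (unmatchedC f).card = n1 - K) (k : Fin (n1 - K)) (i : Fin n2) :
    f i ≠ some (pAssign f h k) := by
  have hm := pAssign_mem h k
  rw [unmatchedC, Finset.mem_sdiff] at hm
  intro hc
  exact hm.2 (Finset.mem_filter.2 ⟨Finset.mem_univ _, ⟨i, hc⟩⟩)

lemma pAssign_strictMono {f : Fin n2 → Option (Fin n1)} {K : ℕ}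
    (h : (unmatchedC f).card = n1 - K) : StrictMono (pAssign f h) := by
  intro a b hab
  exact ((unmatchedC f).orderIsoOfFin h).strictMono hab

lemma pAssign_injective {f : Fin n2 → Option (Fin n1)} {K : ℕ}
    (h : (unmatchedC f).card = n1 - K) : Function.Injective (pAssign f h) :=
  (pAssign_strictMono h).injective

lemma pAssign_surj {f : Fin n2 → Option (Fin n1)} {K : ℕ}
    (h : (unmatchedC f).card = n1 - K) {j : Fin n1} (hj : j ∈ unmatchedC f) :
    ∃ k, pAssign f h k = j := by
  refine ⟨((unmatchedC f).orderIsoOfFin h).symm ⟨j, hj⟩, ?_⟩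
  simp [pAssign]

lemma pAssign_unmatched {f : Fin n2 → Option (Fin n1)} {K : ℕ}
    (h : (unmatchedC f).card = n1 - K) {j : Fin n1} (hj : ∀ i, f i ≠ some j) :
    ∃ k, pAssign f h k = j := by
  apply pAssign_surj
  rw [unmatchedC, Finset.mem_sdiff]
  refine ⟨Finset.mem_univ _, fun hc => ?_⟩
  obtain ⟨i, hi⟩ := (Finset.mem_filter.1 hc).2
  exact hj i hi

end ForwardCount

section ForwardComplete

variable {n1 n2 K : ℕ} {nb1 nb2 : Fin n2 → Fin n1} {f : Fin n2 → Option (Fin n1)}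
  {g : Fin (n1 - K) → Fin n1}

lemma M17_studentComplete :
    (I17 nb1 nb2 K).StudentComplete (M17 nb1 f g) := by
  intro s
  rcases s with ⟨i, t⟩ | k
  · rcases hfi : f i with _ | j
    · induction t using fin3cases
      · rw [CM_n0 hfi, O_singleton]; rfl
      · rw [CM_n1 hfi, O_singleton]; rfl
      · rw [CM_n2 hfi, O_pair _ (by simp)]
        show (1 : ℚ) + 1 = 2
        norm_num
    · by_cases hj : j = nb1 i
      · subst hj
        induction t using fin3cases
        · rw [CM_a0 hfi, O_pair _ (by simp)]
          show (1 : ℚ) + 1 = 2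
          norm_num
        · rw [CM_a1 hfi, O_singleton]; rfl
        · rw [CM_ab2 hfi, O_singleton]; rfl
      · induction t using fin3cases
        · rw [CM_b0 hfi hj, O_singleton]; rfl
        · rw [CM_b1 hfi hj, O_pair _ (by simp)]
          show (1 : ℚ) + 1 = 2
          norm_num
        · rw [CM_ab2 hfi, O_singleton]; rfl
  · rw [CM_p, O_singleton]; rfl

lemma M17_courseComplete (hinj : ∀ i i' j, f i = some j → f i' = some j → i = i')
    (hs : GSize f = K) (hK2 : K ≤ n2)
    (hgf : ∀ k i, f i ≠ some (g k)) (hginj : Function.Injective g)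
    (hgsurj : ∀ j, (∀ i, f i ≠ some j) → ∃ k, g k = j) :
    (I17 nb1 nb2 K).CourseComplete (M17 nb1 f g) := by
  intro c
  rcases c with ⟨i, r⟩ | j | v
  · induction r using fin2cases
    · rcases hfi : f i with _ | j
      · rw [SM_d1_n hfi]; rfl
      · by_cases hj : j = nb1 i
        · subst hj; rw [SM_d1_a hfi]; rfl
        · rw [SM_d1_b hfi hj]; rfl
    · rcases hfi : f i with _ | j
      · rw [SM_d2_n hfi]; rfl
      · rw [SM_d2_ab hfi]; rfl
  · by_cases hm : ∃ i, f i = some j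
    · obtain ⟨i, hfi⟩ := hm
      by_cases hj : j = nb1 i
      · subst hj; rw [SM_c_a hgf hinj hfi]; rfl
      · rw [SM_c_b hgf hinj hfi hj]; rfl
    · push_neg at hm
      obtain ⟨k, hk⟩ := hgsurj j hm
      rw [SM_c_un hm hk hginj]; rfl
  · induction v using fin3cases
    · rw [SM_e1, Finset.card_image_of_injective _ (fun a b h => by simpa using h),
        card_filter_none hs hK2]
      rfl
    · rw [SM_e2, Finset.card_image_of_injective _ (fun a b h => by simpa using h),
        card_filter_none hs hK2]
      rfl
    · rw [SM_f, Finset.card_image_of_injOn (fun a ha b hb h => by simp at h; exact h.1)]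
      show _ = K
      rw [← hs]
      rfl

lemma M17_isMatching (hedge : ∀ i j, f i = some j → j = nb1 i ∨ j = nb2 i)
    (hinj : ∀ i i' j, f i = some j → f i' = some j → i = i')
    (hs : GSize f = K) (hK2 : K ≤ n2)
    (hgf : ∀ k i, f i ≠ some (g k)) (hginj : Function.Injective g)
    (hgsurj : ∀ j, (∀ i, f i ≠ some j) → ∃ k, g k = j) :
    (I17 nb1 nb2 K).IsMatching (M17 nb1 f g) := by
  refine ⟨?_, ?_, ?_⟩
  · rintro ⟨s, c⟩ hm
    rw [mem_M17] at hm
    show acc17 nb1 nb2 s c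
    rcases s with ⟨i, t⟩ | k <;> rcases c with ⟨i', r⟩ | j | v
    · fin_cases t <;> simp [memB] at hm <;> simp [acc17] <;> aesop
    · fin_cases t <;> simp [memB] at hm <;> simp [acc17]
      · exact hm.2
      · rcases hedge i j hm.1 with h | h
        · exact absurd h hm.2
        · exact h
    · fin_cases t <;> simp [memB] at hm <;> simp [acc17] <;> tauto
    · simp [memB] at hm
    · simp [acc17]
    · simp [memB] at hm
  · intro s
    exact le_of_eq (M17_studentComplete s)
  · intro c
    exact le_of_eq (M17_courseComplete hinj hs hK2 hgf hginj hgsurj c)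

end ForwardComplete


section Ranks

variable {n1 n2 K : ℕ} {nb1 nb2 : Fin n2 → Fin n1}

lemma mrank_s1 (i : Fin n2) : mrank17 (n1 := n1) (K := K) (Sum.inl (i, 0)) = 2 * i.val := rfl
lemma mrank_s2 (i : Fin n2) : mrank17 (n1 := n1) (K := K) (Sum.inl (i, 1)) = 2 * i.val + 1 := rfl
lemma mrank_s3 (i : Fin n2) : mrank17 (n1 := n1) (K := K) (Sum.inl (i, 2)) = 2 * n2 + i.val := rfl
lemma mrank_p (k : Fin (n1 - K)) : mrank17 (n1 := n1) (n2 := n2) (Sum.inr k) = 3 * n2 + k.val := rfl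

lemma srank_s1_d (i i' : Fin n2) (r : Fin 2) :
    srank17 (K := K) nb1 nb2 (Sum.inl (i, 0)) (Sum.inl (i', r)) = if r = 0 then 1 else 2 := rfl
lemma srank_s1_c (i : Fin n2) (j : Fin n1) :
    srank17 (K := K) nb1 nb2 (Sum.inl (i, 0)) (Sum.inr (Sum.inl j)) = 0 := rfl
lemma srank_s1_e (i : Fin n2) (v : Fin 3) :
    srank17 (K := K) nb1 nb2 (Sum.inl (i, 0)) (Sum.inr (Sum.inr v)) = 2 := rfl
lemma srank_s2_d (i i' : Fin n2) (r : Fin 2) :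
    srank17 (K := K) nb1 nb2 (Sum.inl (i, 1)) (Sum.inl (i', r)) = if r = 0 then 1 else 2 := rfl
lemma srank_s2_c (i : Fin n2) (j : Fin n1) :
    srank17 (K := K) nb1 nb2 (Sum.inl (i, 1)) (Sum.inr (Sum.inl j)) = 0 := rfl
lemma srank_s2_e (i : Fin n2) (v : Fin 3) :
    srank17 (K := K) nb1 nb2 (Sum.inl (i, 1)) (Sum.inr (Sum.inr v)) = 3 := rfl
lemma srank_s3_d (i i' : Fin n2) (r : Fin 2) :
    srank17 (K := K) nb1 nb2 (Sum.inl (i, 2)) (Sum.inl (i', r)) = 2 := rfl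
lemma srank_p_c (k : Fin (n1 - K)) (j : Fin n1) :
    srank17 (K := K) nb1 nb2 (Sum.inr k) (Sum.inr (Sum.inl j)) = j.val := rfl

end Ranks

section ForwardStable

variable {n1 n2 K : ℕ} {nb1 nb2 : Fin n2 → Fin n1} {f : Fin n2 → Option (Fin n1)}
  {g : Fin (n1 - K) → Fin n1}

lemma M17_stable
    (hedge : ∀ i j, f i = some j → j = nb1 i ∨ j = nb2 i)
    (hinj : ∀ i i' j, f i = some j → f i' = some j → i = i')
    (hmax : ∀ i, f i = none → ∀ j, (j = nb1 i ∨ j = nb2 i) → ∃ i', f i' = some j)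
    (hs : GSize f = K) (hK2 : K ≤ n2)
    (hgf : ∀ k i, f i ≠ some (g k)) (hginj : Function.Injective g)
    (hgsurj : ∀ j, (∀ i, f i ≠ some j) → ∃ k, g k = j)
    (hgmono : ∀ k k', g k < g k' → k < k') :
    (I17 nb1 nb2 K).PairSizeStable noF (M17 nb1 f g) := by
  have hcc := M17_courseComplete (nb1 := nb1) (nb2 := nb2) hinj hs hK2 hgf hginj hgsurj
  rintro s c ⟨hacc, hnin, hwants, D, hD, hpref, hsize, hlim, -⟩
  rw [I17_acc] at hacc
  -- replace the undersubscription disjunct by an explicit witness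
  replace hwants : ∃ s' ∈ SM (M17 nb1 f g) c, (I17 nb1 nb2 K).cPref c s s' := by
    rcases hwants with hw | hw
    · rw [hcc c] at hw
      exact absurd hw (lt_irrefl _)
    · exact hw
  have hsc := M17_studentComplete (nb1 := nb1) (nb2 := nb2) (f := f) (g := g) s
  have hOD : (I17 nb1 nb2 K).O D = (I17 nb1 nb2 K).credits c := by
    refine le_antisymm hsize ?_
    linarith [hlim, hsc]
  obtain ⟨s', hs', hp⟩ := hwants
  rcases s with ⟨i, t⟩ | k
  · induction t using fin3cases
    -- s_i^1
    · rcases c with ⟨i', r⟩ | j | v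
      · -- c = d_{i'}^r, acceptability forces i' = i, r = 0
        simp [acc17] at hacc
        obtain ⟨rfl, rfl⟩ := hacc
        rcases hfi : f i with _ | j
        · exact hnin (mem_CM.1 (by rw [CM_n0 hfi]; simp))
        · by_cases hj : j = nb1 i
          · subst hj
            rw [CM_a0 hfi] at hD
            have hmem : Sum.inr (Sum.inl (nb1 i)) ∈ D := by
              by_contra hx
              have hD2 : D ⊆ {Sum.inr (Sum.inr 2)} := by
                intro z hz
                rcases Finset.mem_insert.1 (hD hz) with rfl | h2
                · exact absurd hz hx
                · exact h2
              have h3 := O_mono (I17 nb1 nb2 K) hD2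
              rw [O_singleton, hOD] at h3
              have h4 : (2 : ℚ) ≤ 1 := h3
              norm_num at h4
            have hsp := hpref _ hmem
            exact not_sPref_of_srank
              (by rw [srank_s1_c, srank_s1_d]; norm_num)
              (by rw [srank_s1_c, srank_s1_d]; norm_num) hsp
          · exact hnin (mem_CM.1 (by rw [CM_b0 hfi hj]; simp))
      · -- c = c_j, acceptability forces j = nb1 i
        simp [acc17] at hacc
        subst hacc
        rcases hfi : f i with _ | j
        · rw [CM_n0 hfi] at hD
          rcases Finset.subset_singleton_iff.1 hD with rfl | rfl
          · rw [O_empty] at hOD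
            have : (0 : ℚ) = 1 := hOD
            norm_num at this
          · rw [O_singleton] at hOD
            have : (2 : ℚ) = 1 := hOD
            norm_num at this
        · by_cases hj : j = nb1 i
          · subst hj
            exact hnin (mem_CM.1 (by rw [CM_a0 hfi]; simp))
          · rw [CM_b0 hfi hj] at hD
            rcases Finset.subset_singleton_iff.1 hD with rfl | rfl
            · rw [O_empty] at hOD
              have : (0 : ℚ) = 1 := hOD
              norm_num at this
            · rw [O_singleton] at hOD
              have : (2 : ℚ) = 1 := hOD
              norm_num at this
      · -- c = e/f course; acceptability forces v = 2 (the course f)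
        simp [acc17] at hacc
        subst hacc
        rcases hfi : f i with _ | j
        · rw [CM_n0 hfi] at hD
          rcases Finset.subset_singleton_iff.1 hD with rfl | rfl
          · rw [O_empty] at hOD
            have : (0 : ℚ) = 1 := hOD
            norm_num at this
          · rw [O_singleton] at hOD
            have : (2 : ℚ) = 1 := hOD
            norm_num at this
        · by_cases hj : j = nb1 i
          · subst hj
            exact hnin (mem_CM.1 (by rw [CM_a0 hfi]; simp))
          · rw [CM_b0 hfi hj] at hD
            rcases Finset.subset_singleton_iff.1 hD with rfl | rfl
            · rw [O_empty] at hOD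
              have : (0 : ℚ) = 1 := hOD
              norm_num at this
            · rw [O_singleton] at hOD
              have : (2 : ℚ) = 1 := hOD
              norm_num at this
    -- s_i^2
    · rcases c with ⟨i', r⟩ | j | v
      · simp [acc17] at hacc
        obtain rfl := hacc
        rcases hfi : f i with _ | j
        · -- f i = none : CM s_i^2 = {d_i^2}
          induction r using fin2cases
          · -- c = d_i^1 : refute Wants, d_i^1 is held by s_i^1
            rw [SM_d1_n hfi] at hs'
            rw [Finset.mem_singleton] at hs'
            subst hs'
            exact not_cPref_of_mrank (by rw [mrank_s1, mrank_s2]; omega) hp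
          · exact hnin (mem_CM.1 (by rw [CM_n1 hfi]; simp))
        · by_cases hj : j = nb1 i
          · subst hj
            induction r using fin2cases
            · exact hnin (mem_CM.1 (by rw [CM_a1 hfi]; simp))
            · -- c = d_i^2 : D must be {d_i^1}, but s_i^2 prefers d_i^1
              rw [CM_a1 hfi] at hD
              rcases Finset.subset_singleton_iff.1 hD with rfl | rfl
              · rw [O_empty] at hOD
                have : (0 : ℚ) = 2 := hOD
                norm_num at this
              · have hsp := hpref _ (Finset.mem_singleton_self _)
                exact not_sPref_of_srank
                  (by rw [srank_s2_d, srank_s2_d]; norm_num)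
                  (by rw [srank_s2_d, srank_s2_d]; norm_num) hsp
          · -- case b : CM s_i^2 = {c_j, F}
            rw [CM_b1 hfi hj] at hD
            have hmem : Sum.inr (Sum.inl j) ∈ D := by
              by_contra hx
              have hD2 : D ⊆ {Sum.inr (Sum.inr 2)} := by
                intro z hz
                rcases Finset.mem_insert.1 (hD hz) with rfl | h2
                · exact absurd hz hx
                · exact h2
              have h3 := O_mono (I17 nb1 nb2 K) hD2
              rw [O_singleton, hOD] at h3
              have h4 : (2 : ℚ) ≤ 1 := h3
              norm_num at h4
            have hsp := hpref _ hmem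
            exact not_sPref_of_srank
              (by rw [srank_s2_c, srank_s2_d]; split_ifs <;> norm_num)
              (by rw [srank_s2_c, srank_s2_d]; split_ifs <;> norm_num) hsp
      · simp [acc17] at hacc
        subst hacc
        rcases hfi : f i with _ | j
        · rw [CM_n1 hfi] at hD
          rcases Finset.subset_singleton_iff.1 hD with rfl | rfl
          · rw [O_empty] at hOD
            have : (0 : ℚ) = 1 := hOD
            norm_num at this
          · rw [O_singleton] at hOD
            have : (2 : ℚ) = 1 := hOD
            norm_num at this
        · by_cases hj : j = nb1 i
          · subst hj
            rw [CM_a1 hfi] at hD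
            rcases Finset.subset_singleton_iff.1 hD with rfl | rfl
            · rw [O_empty] at hOD
              have : (0 : ℚ) = 1 := hOD
              norm_num at this
            · rw [O_singleton] at hOD
              have : (2 : ℚ) = 1 := hOD
              norm_num at this
          · -- case b : is nb2 i matched to i? yes: j = nb2 i by hedge
            have hj2 : j = nb2 i := by
              rcases hedge i j hfi with h | h
              · exact absurd h hj
              · exact h
            subst hj2
            exact hnin (mem_CM.1 (by rw [CM_b1 hfi hj]; simp))
      · simp [acc17] at hacc
        subst hacc
        rcases hfi : f i with _ | j
        · rw [CM_n1 hfi] at hD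
          rcases Finset.subset_singleton_iff.1 hD with rfl | rfl
          · rw [O_empty] at hOD
            have : (0 : ℚ) = 1 := hOD
            norm_num at this
          · rw [O_singleton] at hOD
            have : (2 : ℚ) = 1 := hOD
            norm_num at this
        · by_cases hj : j = nb1 i
          · subst hj
            rw [CM_a1 hfi] at hD
            rcases Finset.subset_singleton_iff.1 hD with rfl | rfl
            · rw [O_empty] at hOD
              have : (0 : ℚ) = 1 := hOD
              norm_num at this
            · rw [O_singleton] at hOD
              have : (2 : ℚ) = 1 := hOD
              norm_num at this
          · exact hnin (mem_CM.1 (by rw [CM_b1 hfi hj]; simp))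
    -- s_i^3
    · rcases c with ⟨i', r⟩ | j | v
      · simp [acc17] at hacc
        obtain ⟨rfl, rfl⟩ := hacc
        rcases hfi : f i with _ | j
        · -- refute Wants : d_i^2 is held by s_i^2
          rw [SM_d2_n hfi] at hs'
          rw [Finset.mem_singleton] at hs'
          subst hs'
          exact not_cPref_of_mrank (by rw [mrank_s2, mrank_s3]; omega) hp
        · exact hnin (mem_CM.1 (by rw [CM_ab2 hfi]; simp))
      · simp [acc17] at hacc
        rcases hfi : f i with _ | j'
        · -- f i = none : refute Wants using maximality
          obtain ⟨i', hfi'⟩ := hmax i hfi j hacc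
          by_cases hj : j = nb1 i'
          · subst hj
            rw [SM_c_a hgf hinj hfi'] at hs'
            rw [Finset.mem_singleton] at hs'
            subst hs'
            refine not_cPref_of_mrank ?_ hp
            rw [mrank_s1, mrank_s3]
            have := i'.isLt
            omega
          · rw [SM_c_b hgf hinj hfi' hj] at hs'
            rw [Finset.mem_singleton] at hs'
            subst hs'
            refine not_cPref_of_mrank ?_ hp
            rw [mrank_s2, mrank_s3]
            have := i'.isLt
            omega
        · rw [CM_ab2 hfi] at hD
          rcases Finset.subset_singleton_iff.1 hD with rfl | rfl
          · rw [O_empty] at hOD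
            have : (0 : ℚ) = 1 := hOD
            norm_num at this
          · rw [O_singleton] at hOD
            have : (2 : ℚ) = 1 := hOD
            norm_num at this
      · simp [acc17] at hacc
        rcases hfi : f i with _ | j
        · rcases hacc with rfl | rfl
          · exact hnin (mem_CM.1 (by rw [CM_n2 hfi]; simp))
          · exact hnin (mem_CM.1 (by rw [CM_n2 hfi]; simp))
        · rw [CM_ab2 hfi] at hD
          rcases Finset.subset_singleton_iff.1 hD with rfl | rfl
          · rw [O_empty] at hOD
            have : (0 : ℚ) = 1 := hOD
            norm_num at this
          · rw [O_singleton] at hOD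
            have : (2 : ℚ) = 1 := hOD
            norm_num at this
  · -- the p-students
    rcases c with ⟨i', r⟩ | j | v
    · exact absurd hacc (by simp [acc17])
    · -- c = c_j
      rw [CM_p] at hD
      have hmem : Sum.inr (Sum.inl (g k)) ∈ D := by
        rcases Finset.subset_singleton_iff.1 hD with rfl | rfl
        · rw [O_empty] at hOD
          have : (0 : ℚ) = 1 := hOD
          norm_num at this
        · exact Finset.mem_singleton_self _
      have hsp := hpref _ hmem
      obtain ⟨-, -, hlt | ⟨heq, -⟩⟩ := hsp
      swap
      · -- equal ranks force j = g k, contradicting (s, c) ∉ M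
        have heq' : j.val = (g k).val := heq
        have : j = g k := Fin.ext heq'
        subst this
        exact hnin (mem_CM.1 (by rw [CM_p]; simp))
      · have hlt' : j.val < (g k).val := hlt
        -- refute Wants
        by_cases hm : ∃ i, f i = some j
        · obtain ⟨i, hfi⟩ := hm
          by_cases hj : j = nb1 i
          · subst hj
            rw [SM_c_a hgf hinj hfi] at hs'
            rw [Finset.mem_singleton] at hs'
            subst hs'
            refine not_cPref_of_mrank ?_ hp
            rw [mrank_s1, mrank_p]
            have := i.isLt
            omega
          · rw [SM_c_b hgf hinj hfi hj] at hs'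
            rw [Finset.mem_singleton] at hs'
            subst hs'
            refine not_cPref_of_mrank ?_ hp
            rw [mrank_s2, mrank_p]
            have := i.isLt
            omega
        · push_neg at hm
          obtain ⟨k', hk'⟩ := hgsurj j hm
          rw [SM_c_un hm hk' hginj] at hs'
          rw [Finset.mem_singleton] at hs'
          subst hs'
          refine not_cPref_of_mrank ?_ hp
          rw [mrank_p, mrank_p]
          have hkk : k' < k := hgmono k' k (by rw [hk']; exact hlt')
          omega
    · exact absurd hacc (by simp [acc17])

end ForwardStable


/-- The forward direction: from a maximal matching of size `K` to a complete
pair-size-stable matching of `I17(G,K)`. -/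
lemma forward17 {n1 n2 K : ℕ} {nb1 nb2 : Fin n2 → Fin n1}
    (hK2 : K ≤ n2)
    (hex : ∃ f, GMaximal nb1 nb2 f ∧ GSize f = K) :
    ∃ M : Finset (S17 n1 n2 K × C17 n1 n2),
      (I17 nb1 nb2 K).IsMatching M ∧ (I17 nb1 nb2 K).StudentComplete M ∧
      (I17 nb1 nb2 K).CourseComplete M ∧ (I17 nb1 nb2 K).PairSizeStable noF M := by
  obtain ⟨f, ⟨⟨hedge, hinj⟩, hmax⟩, hs⟩ := hex
  have hcard := card_unmatchedC hinj hs
  set g : Fin (n1 - K) → Fin n1 := pAssign f hcard with hg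
  have hgf : ∀ k i, f i ≠ some (g k) := fun k i => pAssign_not_matched hcard k i
  have hginj : Function.Injective g := pAssign_injective hcard
  have hgsurj : ∀ j, (∀ i, f i ≠ some j) → ∃ k, g k = j := fun j hj =>
    pAssign_unmatched hcard hj
  have hgmono : ∀ k k', g k < g k' → k < k' := fun k k' h =>
    (pAssign_strictMono hcard).lt_iff_lt.1 h
  exact ⟨M17 nb1 f g,
    M17_isMatching hedge hinj hs hK2 hgf hginj hgsurj,
    M17_studentComplete,
    M17_courseComplete hinj hs hK2 hgf hginj hgsurj,
    M17_stable hedge hinj hmax hs hK2 hgf hginj hgsurj hgmono⟩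

/-! ### Counting: student-completeness iff course-completeness -/

section Counting

lemma O_insert {S C : Type*} [DecidableEq S] [DecidableEq C] (I : CA S C)
    {A : Finset C} {x : C} (h : x ∉ A) : I.O (insert x A) = I.credits x + I.O A :=
  Finset.sum_insert h

lemma eq_singleton_of_O_le {S C : Type*} [DecidableEq S] [DecidableEq C] (I : CA S C)
    {A : Finset C} {x : C} (hx : x ∈ A) (hO : I.O A ≤ I.credits x) : A = {x} := by
  refine Finset.eq_singleton_iff_unique_mem.2 ⟨hx, fun y hy => ?_⟩
  by_contra hne
  have hs : insert y {x} ⊆ A := by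
    intro z hz
    rcases Finset.mem_insert.1 hz with rfl | hz
    · exact hy
    · rw [Finset.mem_singleton] at hz
      subst hz
      exact hx
  have h2 := O_mono I hs
  rw [O_insert _ (by simp [hne]), O_singleton] at h2
  have := I.credits_pos y
  linarith

lemma eq_pair_of_O_le {S C : Type*} [DecidableEq S] [DecidableEq C] (I : CA S C)
    {A : Finset C} {x y : C} (hx : x ∈ A) (hy : y ∈ A) (hne : x ≠ y)
    (hO : I.O A ≤ I.credits x + I.credits y) : A = {x, y} := by
  refine Finset.Subset.antisymm ?_ ?_
  · intro z hz
    by_contra hzn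
    rw [Finset.mem_insert, Finset.mem_singleton] at hzn
    push_neg at hzn
    have hs : insert z {x, y} ⊆ A := by
      intro w hw
      rcases Finset.mem_insert.1 hw with rfl | hw
      · exact hz
      · rcases Finset.mem_insert.1 hw with rfl | hw
        · exact hx
        · rw [Finset.mem_singleton] at hw
          subst hw
          exact hy
    have h2 := O_mono I hs
    rw [O_insert _ (by simp [hzn.1, hzn.2]), O_pair _ hne] at h2
    have := I.credits_pos z
    linarith
  · intro z hz
    rcases Finset.mem_insert.1 hz with rfl | hz
    · exact hx
    · rw [Finset.mem_singleton] at hz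
      subst hz
      exact hy

lemma sum_O_eq {S C : Type*} [DecidableEq S] [DecidableEq C] [Fintype S] [Fintype C]
    (I : CA S C) (M : Finset (S × C)) :
    ∑ s : S, I.O (CM M s) = ∑ c : C, ((SM M c).card : ℚ) * I.credits c := by
  have L : ∀ s : S, I.O (CM M s) = ∑ p ∈ M.filter (fun p => p.1 = s), I.credits p.2 := by
    intro s
    rw [CA.O, CM, Finset.sum_image]
    intro x hx y hy hxy
    have hx' := (Finset.mem_filter.1 hx).2
    have hy' := (Finset.mem_filter.1 hy).2
    exact Prod.ext (hx'.trans hy'.symm) hxy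
  have R : ∀ c : C, ((SM M c).card : ℚ) * I.credits c =
      ∑ p ∈ M.filter (fun p => p.2 = c), I.credits p.2 := by
    intro c
    rw [SM, Finset.card_image_of_injOn (fun x hx y hy hxy =>
      Prod.ext hxy (((Finset.mem_filter.1 hx).2).trans ((Finset.mem_filter.1 hy).2).symm))]
    calc ((M.filter (fun p => p.2 = c)).card : ℚ) * I.credits c
        = ∑ _p ∈ M.filter (fun p => p.2 = c), I.credits c := by
          rw [Finset.sum_const, nsmul_eq_mul]
      _ = ∑ p ∈ M.filter (fun p => p.2 = c), I.credits p.2 :=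
          Finset.sum_congr rfl (fun p hp => by rw [(Finset.mem_filter.1 hp).2])
  simp_rw [L, R]
  rw [Finset.sum_fiberwise, Finset.sum_fiberwise]

lemma sum_limit17 {n1 n2 K : ℕ} (hK1 : K ≤ n1) :
    ∑ s : S17 n1 n2 K, limit17 s = 6 * n2 + n1 - K := by
  rw [Fintype.sum_sum_type]
  simp only [limit17, Finset.sum_const, Finset.card_univ, Fintype.card_prod,
    Fintype.card_fin, nsmul_eq_mul]
  push_cast [Nat.cast_sub hK1]
  ring

lemma sum_quota17 {n1 n2 K : ℕ} (hK1 : K ≤ n1) (hK2 : K ≤ n2) :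
    ∑ c : C17 n1 n2, ((quota17 K c : ℚ) * credits17 c) = 6 * n2 + n1 - K := by
  rw [Fintype.sum_sum_type, Fintype.sum_sum_type]
  simp only [quota17, credits17, Fin.sum_univ_three, Finset.sum_const, Finset.card_univ,
    Fintype.card_prod, Fintype.card_fin, nsmul_eq_mul]
  norm_num
  push_cast [Nat.cast_sub hK1, Nat.cast_sub hK2]
  ring

lemma SC_iff_CC {n1 n2 K : ℕ} {nb1 nb2 : Fin n2 → Fin n1}
    {M : Finset (S17 n1 n2 K × C17 n1 n2)} (hK1 : K ≤ n1) (hK2 : K ≤ n2)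
    (hM : (I17 nb1 nb2 K).IsMatching M) :
    ((I17 nb1 nb2 K).StudentComplete M ↔ (I17 nb1 nb2 K).CourseComplete M) := by
  have key := sum_O_eq (I17 nb1 nb2 K) M
  have hsl : ∑ s : S17 n1 n2 K, (I17 nb1 nb2 K).limit s = 6 * n2 + n1 - K := sum_limit17 hK1
  have hsq : ∑ c : C17 n1 n2, (((I17 nb1 nb2 K).quota c : ℚ) * (I17 nb1 nb2 K).credits c) =
      6 * n2 + n1 - K := sum_quota17 hK1 hK2
  constructor
  · intro hsc c0
    have h1 : ∑ s : S17 n1 n2 K, (I17 nb1 nb2 K).O (CM M s) =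
        ∑ s : S17 n1 n2 K, (I17 nb1 nb2 K).limit s :=
      Finset.sum_congr rfl fun s _ => hsc s
    have h2 : ∑ c : C17 n1 n2, ((SM M c).card : ℚ) * (I17 nb1 nb2 K).credits c =
        ∑ c : C17 n1 n2, (((I17 nb1 nb2 K).quota c : ℚ) * (I17 nb1 nb2 K).credits c) := by
      rw [← key, h1, hsl, hsq]
    have hle : ∀ c ∈ (univ : Finset (C17 n1 n2)),
        ((SM M c).card : ℚ) * (I17 nb1 nb2 K).credits c ≤
        ((I17 nb1 nb2 K).quota c : ℚ) * (I17 nb1 nb2 K).credits c := fun c _ =>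
      mul_le_mul_of_nonneg_right (Nat.cast_le.2 (hM.2.2 c)) ((I17 nb1 nb2 K).credits_pos c).le
    have h3 := (Finset.sum_eq_sum_iff_of_le hle).1 h2 c0 (Finset.mem_univ _)
    have hcp := (I17 nb1 nb2 K).credits_pos c0
    have h4 : ((SM M c0).card : ℚ) = ((I17 nb1 nb2 K).quota c0 : ℚ) :=
      mul_right_cancel₀ (ne_of_gt hcp) h3
    exact_mod_cast h4
  · intro hcc s0
    have h1 : ∑ c : C17 n1 n2, ((SM M c).card : ℚ) * (I17 nb1 nb2 K).credits c =
        ∑ c : C17 n1 n2, (((I17 nb1 nb2 K).quota c : ℚ) * (I17 nb1 nb2 K).credits c) :=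
      Finset.sum_congr rfl fun c _ => by rw [hcc c]
    have h2 : ∑ s : S17 n1 n2 K, (I17 nb1 nb2 K).O (CM M s) =
        ∑ s : S17 n1 n2 K, (I17 nb1 nb2 K).limit s := by
      rw [key, h1, hsl, hsq]
    have hle : ∀ s ∈ (univ : Finset (S17 n1 n2 K)),
        (I17 nb1 nb2 K).O (CM M s) ≤ (I17 nb1 nb2 K).limit s := fun s _ => hM.2.1 s
    exact (Finset.sum_eq_sum_iff_of_le hle).1 h2 s0 (Finset.mem_univ _)

end Counting


/-! ### The backward direction -/

section Backward

variable {n1 n2 K : ℕ} {nb1 nb2 : Fin n2 → Fin n1} {M : Finset (S17 n1 n2 K × C17 n1 n2)}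

/-- The `w`-vertices whose student `s_i^3` holds `d_i^2`. -/
def T17 (M : Finset (S17 n1 n2 K × C17 n1 n2)) : Finset (Fin n2) :=
  univ.filter (fun i => (Sum.inl (i, 1) : C17 n1 n2) ∈ CM M (Sum.inl (i, 2)))

lemma B1 (hM : (I17 nb1 nb2 K).IsMatching M) (hsc : (I17 nb1 nb2 K).StudentComplete M)
    (i : Fin n2) :
    CM M (Sum.inl (i, 0)) = {Sum.inl (i, 0)} ∨
    CM M (Sum.inl (i, 0)) = {Sum.inr (Sum.inl (nb1 i)), Sum.inr (Sum.inr 2)} := by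
  have hO : (I17 nb1 nb2 K).O (CM M (Sum.inl (i, 0))) = 2 := hsc _
  have hsub : ∀ c ∈ CM M (Sum.inl (i, 0)),
      c = Sum.inl (i, 0) ∨ c = Sum.inr (Sum.inl (nb1 i)) ∨ c = Sum.inr (Sum.inr 2) := by
    intro c hc
    have hacc : acc17 nb1 nb2 (Sum.inl (i, 0)) c := hM.1 _ (mem_CM.1 hc)
    rcases c with ⟨i', r⟩ | j | v
    · simp [acc17] at hacc
      obtain ⟨rfl, rfl⟩ := hacc
      left; rfl
    · simp [acc17] at hacc
      subst hacc
      right; left; rfl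
    · simp [acc17] at hacc
      subst hacc
      right; right; rfl
  by_cases h1 : (Sum.inl (i, 0) : C17 n1 n2) ∈ CM M (Sum.inl (i, 0))
  · left
    apply eq_singleton_of_O_le (I17 nb1 nb2 K) h1
    rw [hO]
    exact le_of_eq rfl
  · right
    have hc1 : (Sum.inr (Sum.inl (nb1 i)) : C17 n1 n2) ∈ CM M (Sum.inl (i, 0)) := by
      by_contra h2
      have hsub2 : CM M (Sum.inl (i, 0)) ⊆ {Sum.inr (Sum.inr 2)} := by
        intro z hz
        rcases hsub z hz with rfl | rfl | rfl
        · exact absurd hz h1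
        · exact absurd hz h2
        · exact Finset.mem_singleton_self _
      have h3 := O_mono (I17 nb1 nb2 K) hsub2
      rw [hO, O_singleton] at h3
      have h4 : (2 : ℚ) ≤ 1 := h3
      norm_num at h4
    have hc2 : (Sum.inr (Sum.inr 2) : C17 n1 n2) ∈ CM M (Sum.inl (i, 0)) := by
      by_contra h2
      have hsub2 : CM M (Sum.inl (i, 0)) ⊆ {Sum.inr (Sum.inl (nb1 i))} := by
        intro z hz
        rcases hsub z hz with rfl | rfl | rfl
        · exact absurd hz h1
        · exact Finset.mem_singleton_self _
        · exact absurd hz h2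
      have h3 := O_mono (I17 nb1 nb2 K) hsub2
      rw [hO, O_singleton] at h3
      have h4 : (2 : ℚ) ≤ 1 := h3
      norm_num at h4
    apply eq_pair_of_O_le (I17 nb1 nb2 K) hc1 hc2 (by simp)
    rw [hO]
    norm_num [I17_credits, credits17]

lemma B2 (hM : (I17 nb1 nb2 K).IsMatching M) (hsc : (I17 nb1 nb2 K).StudentComplete M)
    (i : Fin n2) :
    CM M (Sum.inl (i, 1)) = {Sum.inl (i, 0)} ∨
    CM M (Sum.inl (i, 1)) = {Sum.inl (i, 1)} ∨
    CM M (Sum.inl (i, 1)) = {Sum.inr (Sum.inl (nb2 i)), Sum.inr (Sum.inr 2)} := by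
  have hO : (I17 nb1 nb2 K).O (CM M (Sum.inl (i, 1))) = 2 := hsc _
  have hsub : ∀ c ∈ CM M (Sum.inl (i, 1)),
      c = Sum.inl (i, 0) ∨ c = Sum.inl (i, 1) ∨ c = Sum.inr (Sum.inl (nb2 i)) ∨
      c = Sum.inr (Sum.inr 2) := by
    intro c hc
    have hacc : acc17 nb1 nb2 (Sum.inl (i, 1)) c := hM.1 _ (mem_CM.1 hc)
    rcases c with ⟨i', r⟩ | j | v
    · simp [acc17] at hacc
      obtain rfl := hacc
      induction r using fin2cases
      · left; rfl
      · right; left; rfl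
    · simp [acc17] at hacc
      subst hacc
      right; right; left; rfl
    · simp [acc17] at hacc
      subst hacc
      right; right; right; rfl
  by_cases h1 : (Sum.inl (i, 0) : C17 n1 n2) ∈ CM M (Sum.inl (i, 1))
  · left
    apply eq_singleton_of_O_le (I17 nb1 nb2 K) h1
    rw [hO]
    exact le_of_eq rfl
  by_cases h2 : (Sum.inl (i, 1) : C17 n1 n2) ∈ CM M (Sum.inl (i, 1))
  · right; left
    apply eq_singleton_of_O_le (I17 nb1 nb2 K) h2
    rw [hO]
    exact le_of_eq rfl
  right; right
  have hc1 : (Sum.inr (Sum.inl (nb2 i)) : C17 n1 n2) ∈ CM M (Sum.inl (i, 1)) := by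
    by_contra h3
    have hsub2 : CM M (Sum.inl (i, 1)) ⊆ {Sum.inr (Sum.inr 2)} := by
      intro z hz
      rcases hsub z hz with rfl | rfl | rfl | rfl
      · exact absurd hz h1
      · exact absurd hz h2
      · exact absurd hz h3
      · exact Finset.mem_singleton_self _
    have h4 := O_mono (I17 nb1 nb2 K) hsub2
    rw [hO, O_singleton] at h4
    have h5 : (2 : ℚ) ≤ 1 := h4
    norm_num at h5
  have hc2 : (Sum.inr (Sum.inr 2) : C17 n1 n2) ∈ CM M (Sum.inl (i, 1)) := by
    by_contra h3
    have hsub2 : CM M (Sum.inl (i, 1)) ⊆ {Sum.inr (Sum.inl (nb2 i))} := by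
      intro z hz
      rcases hsub z hz with rfl | rfl | rfl | rfl
      · exact absurd hz h1
      · exact absurd hz h2
      · exact Finset.mem_singleton_self _
      · exact absurd hz h3
    have h4 := O_mono (I17 nb1 nb2 K) hsub2
    rw [hO, O_singleton] at h4
    have h5 : (2 : ℚ) ≤ 1 := h4
    norm_num at h5
  apply eq_pair_of_O_le (I17 nb1 nb2 K) hc1 hc2 (by simp)
  rw [hO]
  norm_num [I17_credits, credits17]

lemma occd1 (hM : (I17 nb1 nb2 K).IsMatching M) (hcc : (I17 nb1 nb2 K).CourseComplete M)
    (i : Fin n2) :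
    ∃ sx, SM M (Sum.inl (i, 0)) = {sx} ∧
      (sx = Sum.inl (i, 0) ∨ sx = Sum.inl (i, 1)) := by
  have hcard : (SM M (Sum.inl (i, 0))).card = 1 := hcc _
  obtain ⟨sx, hsx⟩ := Finset.card_eq_one.1 hcard
  refine ⟨sx, hsx, ?_⟩
  have hm : sx ∈ SM M (Sum.inl (i, 0)) := hsx ▸ Finset.mem_singleton_self _
  have hacc : acc17 nb1 nb2 sx (Sum.inl (i, 0)) := hM.1 _ (mem_SM.1 hm)
  rcases sx with ⟨i', t⟩ | k
  · induction t using fin3cases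
    · simp [acc17] at hacc
      subst hacc
      left; rfl
    · simp [acc17] at hacc
      subst hacc
      right; rfl
    · simp [acc17] at hacc
  · simp [acc17] at hacc

lemma occd2 (hM : (I17 nb1 nb2 K).IsMatching M) (hcc : (I17 nb1 nb2 K).CourseComplete M)
    (i : Fin n2) :
    ∃ sx, SM M (Sum.inl (i, 1)) = {sx} ∧
      (sx = Sum.inl (i, 1) ∨ sx = Sum.inl (i, 2)) := by
  have hcard : (SM M (Sum.inl (i, 1))).card = 1 := hcc _
  obtain ⟨sx, hsx⟩ := Finset.card_eq_one.1 hcard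
  refine ⟨sx, hsx, ?_⟩
  have hm : sx ∈ SM M (Sum.inl (i, 1)) := hsx ▸ Finset.mem_singleton_self _
  have hacc : acc17 nb1 nb2 sx (Sum.inl (i, 1)) := hM.1 _ (mem_SM.1 hm)
  rcases sx with ⟨i', t⟩ | k
  · induction t using fin3cases
    · simp [acc17] at hacc
    · simp [acc17] at hacc
      subst hacc
      left; rfl
    · simp [acc17] at hacc
      subst hacc
      right; rfl
  · simp [acc17] at hacc

lemma CM3_of_memT (hsc : (I17 nb1 nb2 K).StudentComplete M) {i : Fin n2}
    (hT : i ∈ T17 M) : CM M (Sum.inl (i, 2)) = {Sum.inl (i, 1)} := by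
  have hd2 : (Sum.inl (i, 1) : C17 n1 n2) ∈ CM M (Sum.inl (i, 2)) :=
    (Finset.mem_filter.1 hT).2
  apply eq_singleton_of_O_le (I17 nb1 nb2 K) hd2
  rw [hsc _]
  exact le_of_eq rfl

lemma T_of_s1pair (hM : (I17 nb1 nb2 K).IsMatching M)
    (hsc : (I17 nb1 nb2 K).StudentComplete M) (hcc : (I17 nb1 nb2 K).CourseComplete M)
    {i : Fin n2}
    (h1 : CM M (Sum.inl (i, 0)) = {Sum.inr (Sum.inl (nb1 i)), Sum.inr (Sum.inr 2)}) :
    i ∈ T17 M ∧ CM M (Sum.inl (i, 1)) = {Sum.inl (i, 0)} := by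
  obtain ⟨sA, hSM, hcases⟩ := occd1 hM hcc i
  have hss : sA = Sum.inl (i, 1) := by
    rcases hcases with rfl | rfl
    · have hmem : (Sum.inl (i, 0) : C17 n1 n2) ∈ CM M (Sum.inl (i, 0)) :=
        mem_CM.2 (mem_SM.1 (hSM ▸ Finset.mem_singleton_self _))
      rw [h1] at hmem
      simp at hmem
    · rfl
  subst hss
  have hd1 : (Sum.inl (i, 0) : C17 n1 n2) ∈ CM M (Sum.inl (i, 1)) :=
    mem_CM.2 (mem_SM.1 (hSM ▸ Finset.mem_singleton_self _))
  have h2 : CM M (Sum.inl (i, 1)) = {Sum.inl (i, 0)} := by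
    rcases B2 hM hsc i with h | h | h
    · exact h
    · rw [h] at hd1; simp at hd1
    · rw [h] at hd1; simp at hd1
  refine ⟨?_, h2⟩
  obtain ⟨sB, hSM2, hcases2⟩ := occd2 hM hcc i
  rcases hcases2 with rfl | rfl
  · have hd2 : (Sum.inl (i, 1) : C17 n1 n2) ∈ CM M (Sum.inl (i, 1)) :=
      mem_CM.2 (mem_SM.1 (hSM2 ▸ Finset.mem_singleton_self _))
    rw [h2] at hd2
    simp at hd2
  · have hd2 : (Sum.inl (i, 1) : C17 n1 n2) ∈ CM M (Sum.inl (i, 2)) :=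
      mem_CM.2 (mem_SM.1 (hSM2 ▸ Finset.mem_singleton_self _))
    exact Finset.mem_filter.2 ⟨Finset.mem_univ _, hd2⟩

lemma T_of_s2pair (hM : (I17 nb1 nb2 K).IsMatching M)
    (hsc : (I17 nb1 nb2 K).StudentComplete M) (hcc : (I17 nb1 nb2 K).CourseComplete M)
    {i : Fin n2}
    (h2 : CM M (Sum.inl (i, 1)) = {Sum.inr (Sum.inl (nb2 i)), Sum.inr (Sum.inr 2)}) :
    i ∈ T17 M ∧ CM M (Sum.inl (i, 0)) = {Sum.inl (i, 0)} := by
  obtain ⟨sA, hSM, hcases⟩ := occd1 hM hcc i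
  have hss : sA = Sum.inl (i, 0) := by
    rcases hcases with rfl | rfl
    · rfl
    · have hmem : (Sum.inl (i, 0) : C17 n1 n2) ∈ CM M (Sum.inl (i, 1)) :=
        mem_CM.2 (mem_SM.1 (hSM ▸ Finset.mem_singleton_self _))
      rw [h2] at hmem
      simp at hmem
  subst hss
  have hd1 : (Sum.inl (i, 0) : C17 n1 n2) ∈ CM M (Sum.inl (i, 0)) :=
    mem_CM.2 (mem_SM.1 (hSM ▸ Finset.mem_singleton_self _))
  have h1 : CM M (Sum.inl (i, 0)) = {Sum.inl (i, 0)} := by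
    rcases B1 hM hsc i with h | h
    · exact h
    · rw [h] at hd1; simp at hd1
  refine ⟨?_, h1⟩
  obtain ⟨sB, hSM2, hcases2⟩ := occd2 hM hcc i
  rcases hcases2 with rfl | rfl
  · have hd2 : (Sum.inl (i, 1) : C17 n1 n2) ∈ CM M (Sum.inl (i, 1)) :=
      mem_CM.2 (mem_SM.1 (hSM2 ▸ Finset.mem_singleton_self _))
    rw [h2] at hd2
    simp at hd2
  · have hd2 : (Sum.inl (i, 1) : C17 n1 n2) ∈ CM M (Sum.inl (i, 2)) :=
      mem_CM.2 (mem_SM.1 (hSM2 ▸ Finset.mem_singleton_self _))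
    exact Finset.mem_filter.2 ⟨Finset.mem_univ _, hd2⟩

lemma struct_of_T (hM : (I17 nb1 nb2 K).IsMatching M)
    (hsc : (I17 nb1 nb2 K).StudentComplete M) (hcc : (I17 nb1 nb2 K).CourseComplete M)
    {i : Fin n2} (hT : i ∈ T17 M) :
    (CM M (Sum.inl (i, 0)) = {Sum.inr (Sum.inl (nb1 i)), Sum.inr (Sum.inr 2)} ∧
      CM M (Sum.inl (i, 1)) = {Sum.inl (i, 0)}) ∨
    (CM M (Sum.inl (i, 0)) = {Sum.inl (i, 0)} ∧
      CM M (Sum.inl (i, 1)) = {Sum.inr (Sum.inl (nb2 i)), Sum.inr (Sum.inr 2)}) := by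
  have h3 := CM3_of_memT hsc hT
  obtain ⟨sB, hSM2, hc2⟩ := occd2 hM hcc i
  have hs3 : sB = Sum.inl (i, 2) := by
    have hmem : (Sum.inl (i, 2) : S17 n1 n2 K) ∈ SM M (Sum.inl (i, 1)) :=
      mem_SM.2 (mem_CM.1 (by rw [h3]; exact Finset.mem_singleton_self _))
    rw [hSM2, Finset.mem_singleton] at hmem
    exact hmem.symm
  subst hs3
  have hs2not : (Sum.inl (i, 1) : C17 n1 n2) ∉ CM M (Sum.inl (i, 1)) := by
    intro hmem
    have h4 : (Sum.inl (i, 1) : S17 n1 n2 K) ∈ SM M (Sum.inl (i, 1)) :=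
      mem_SM.2 (mem_CM.1 hmem)
    rw [hSM2, Finset.mem_singleton] at h4
    simp at h4
  have h2 : CM M (Sum.inl (i, 1)) = {Sum.inl (i, 0)} ∨
      CM M (Sum.inl (i, 1)) = {Sum.inr (Sum.inl (nb2 i)), Sum.inr (Sum.inr 2)} := by
    rcases B2 hM hsc i with h | h | h
    · exact Or.inl h
    · exact absurd (h ▸ Finset.mem_singleton_self _) hs2not
    · exact Or.inr h
  rcases h2 with h2 | h2
  · left
    obtain ⟨sA, hSM1, hc1⟩ := occd1 hM hcc i
    have hmem : (Sum.inl (i, 1) : S17 n1 n2 K) ∈ SM M (Sum.inl (i, 0)) :=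
      mem_SM.2 (mem_CM.1 (by rw [h2]; exact Finset.mem_singleton_self _))
    rw [hSM1, Finset.mem_singleton] at hmem
    have hs1not : (Sum.inl (i, 0) : C17 n1 n2) ∉ CM M (Sum.inl (i, 0)) := by
      intro hm
      have h5 : (Sum.inl (i, 0) : S17 n1 n2 K) ∈ SM M (Sum.inl (i, 0)) :=
        mem_SM.2 (mem_CM.1 hm)
      rw [hSM1, Finset.mem_singleton] at h5
      rw [← hmem] at h5
      simp at h5
    rcases B1 hM hsc i with h | h
    · exact absurd (h ▸ Finset.mem_singleton_self _) hs1not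
    · exact ⟨h, h2⟩
  · right
    obtain ⟨sA, hSM1, hc1⟩ := occd1 hM hcc i
    have hd1mem : (Sum.inl (i, 0) : C17 n1 n2) ∈ CM M sA :=
      mem_CM.2 (mem_SM.1 (by rw [hSM1]; exact Finset.mem_singleton_self _))
    rcases B1 hM hsc i with h | h
    · exact ⟨h, h2⟩
    · exfalso
      rcases hc1 with rfl | rfl
      · rw [h] at hd1mem; simp at hd1mem
      · rw [h2] at hd1mem; simp at hd1mem

end Backward


section Backward2

variable {n1 n2 K : ℕ} {nb1 nb2 : Fin n2 → Fin n1} {M : Finset (S17 n1 n2 K × C17 n1 n2)}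

lemma SMF_eq (hM : (I17 nb1 nb2 K).IsMatching M)
    (hsc : (I17 nb1 nb2 K).StudentComplete M) (hcc : (I17 nb1 nb2 K).CourseComplete M) :
    SM M (Sum.inr (Sum.inr 2)) = (T17 M).image (fun i =>
      if (Sum.inr (Sum.inr 2) : C17 n1 n2) ∈ CM M (Sum.inl (i, 0))
      then (Sum.inl (i, 0) : S17 n1 n2 K) else Sum.inl (i, 1)) := by
  ext s'
  simp only [Finset.mem_image]
  constructor
  · intro hs'
    have hacc : acc17 nb1 nb2 s' (Sum.inr (Sum.inr 2)) := hM.1 _ (mem_SM.1 hs')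
    rcases s' with ⟨i, t⟩ | k
    swap
    · simp [acc17] at hacc
    induction t using fin3cases
    · have hF : (Sum.inr (Sum.inr 2) : C17 n1 n2) ∈ CM M (Sum.inl (i, 0)) :=
        mem_CM.2 (mem_SM.1 hs')
      have h1 : CM M (Sum.inl (i, 0)) =
          {Sum.inr (Sum.inl (nb1 i)), Sum.inr (Sum.inr 2)} := by
        rcases B1 hM hsc i with h | h
        · rw [h] at hF; simp at hF
        · exact h
      exact ⟨i, (T_of_s1pair hM hsc hcc h1).1, by rw [if_pos hF]⟩
    · have hF : (Sum.inr (Sum.inr 2) : C17 n1 n2) ∈ CM M (Sum.inl (i, 1)) :=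
        mem_CM.2 (mem_SM.1 hs')
      have h2 : CM M (Sum.inl (i, 1)) =
          {Sum.inr (Sum.inl (nb2 i)), Sum.inr (Sum.inr 2)} := by
        rcases B2 hM hsc i with h | h | h
        · rw [h] at hF; simp at hF
        · rw [h] at hF; simp at hF
        · exact h
      obtain ⟨hT, h1'⟩ := T_of_s2pair hM hsc hcc h2
      refine ⟨i, hT, ?_⟩
      have hFn : (Sum.inr (Sum.inr 2) : C17 n1 n2) ∉ CM M (Sum.inl (i, 0)) := by
        rw [h1']; simp
      rw [if_neg hFn]
    · simp [acc17] at hacc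
  · rintro ⟨i, hT, rfl⟩
    rcases struct_of_T hM hsc hcc hT with ⟨h1, h2⟩ | ⟨h1, h2⟩
    · have hF : (Sum.inr (Sum.inr 2) : C17 n1 n2) ∈ CM M (Sum.inl (i, 0)) := by
        rw [h1]; simp
      rw [if_pos hF]
      exact mem_SM.2 (mem_CM.1 hF)
    · have hFn : (Sum.inr (Sum.inr 2) : C17 n1 n2) ∉ CM M (Sum.inl (i, 0)) := by
        rw [h1]; simp
      rw [if_neg hFn]
      have hF : (Sum.inr (Sum.inr 2) : C17 n1 n2) ∈ CM M (Sum.inl (i, 1)) := by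
        rw [h2]; simp
      exact mem_SM.2 (mem_CM.1 hF)

lemma cardT17 (hM : (I17 nb1 nb2 K).IsMatching M)
    (hsc : (I17 nb1 nb2 K).StudentComplete M) (hcc : (I17 nb1 nb2 K).CourseComplete M) :
    (T17 M).card = K := by
  have hF : (SM M (Sum.inr (Sum.inr 2))).card = K := hcc _
  rw [SMF_eq hM hsc hcc, Finset.card_image_of_injOn ?_] at hF
  · exact hF
  · intro a ha b hb h
    dsimp only at h
    split_ifs at h <;> simp at h <;> tauto

lemma CMe_of_notT (hM : (I17 nb1 nb2 K).IsMatching M)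
    (hsc : (I17 nb1 nb2 K).StudentComplete M) (hcc : (I17 nb1 nb2 K).CourseComplete M)
    {i : Fin n2} (hiT : i ∉ T17 M) :
    CM M (Sum.inl (i, 2)) = {Sum.inr (Sum.inr 0), Sum.inr (Sum.inr 1)} := by
  have key : ∀ v : Fin 3, v = 0 ∨ v = 1 →
      SM M (Sum.inr (Sum.inr v)) =
        (univ \ T17 M).image (fun i => (Sum.inl (i, 2) : S17 n1 n2 K)) := by
    intro v hv
    have hcard : (SM M (Sum.inr (Sum.inr v))).card = n2 - K := by
      rcases hv with rfl | rfl
      · exact hcc _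
      · exact hcc _
    have hsub : SM M (Sum.inr (Sum.inr v)) ⊆
        (univ \ T17 M).image (fun i => (Sum.inl (i, 2) : S17 n1 n2 K)) := by
      intro s' hs'
      have hacc : acc17 nb1 nb2 s' (Sum.inr (Sum.inr v)) := hM.1 _ (mem_SM.1 hs')
      rcases s' with ⟨i', t⟩ | k
      swap
      · exact absurd hacc (by simp [acc17])
      induction t using fin3cases
      · simp [acc17] at hacc
        subst hacc
        rcases hv with hv | hv <;> exact absurd hv (by decide)
      · simp [acc17] at hacc
        subst hacc
        rcases hv with hv | hv <;> exact absurd hv (by decide)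
      · refine Finset.mem_image.2 ⟨i', Finset.mem_sdiff.2 ⟨Finset.mem_univ _, fun hT => ?_⟩, rfl⟩
        have hE : (Sum.inr (Sum.inr v) : C17 n1 n2) ∈ CM M (Sum.inl (i', 2)) :=
          mem_CM.2 (mem_SM.1 hs')
        rw [CM3_of_memT hsc hT] at hE
        simp at hE
    have himg : ((univ \ T17 M).image (fun i => (Sum.inl (i, 2) : S17 n1 n2 K))).card ≤
        n2 - K := by
      refine le_trans Finset.card_image_le ?_
      rw [Finset.card_sdiff_of_subset (Finset.subset_univ _), Finset.card_univ, Fintype.card_fin,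
        cardT17 hM hsc hcc]
    exact Finset.eq_of_subset_of_card_le hsub (by rw [hcard]; exact himg)
  have h0 : (Sum.inr (Sum.inr 0) : C17 n1 n2) ∈ CM M (Sum.inl (i, 2)) := by
    have hmem : (Sum.inl (i, 2) : S17 n1 n2 K) ∈ SM M (Sum.inr (Sum.inr 0)) := by
      rw [key 0 (Or.inl rfl)]
      exact Finset.mem_image.2 ⟨i, Finset.mem_sdiff.2 ⟨Finset.mem_univ _, hiT⟩, rfl⟩
    exact mem_CM.2 (mem_SM.1 hmem)
  have h1 : (Sum.inr (Sum.inr 1) : C17 n1 n2) ∈ CM M (Sum.inl (i, 2)) := by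
    have hmem : (Sum.inl (i, 2) : S17 n1 n2 K) ∈ SM M (Sum.inr (Sum.inr 1)) := by
      rw [key 1 (Or.inr rfl)]
      exact Finset.mem_image.2 ⟨i, Finset.mem_sdiff.2 ⟨Finset.mem_univ _, hiT⟩, rfl⟩
    exact mem_CM.2 (mem_SM.1 hmem)
  apply eq_pair_of_O_le (I17 nb1 nb2 K) h0 h1 (by simp)
  rw [hsc _]
  norm_num [I17_credits, I17_limit, credits17, limit17]

lemma no_s3_c (hM : (I17 nb1 nb2 K).IsMatching M)
    (hsc : (I17 nb1 nb2 K).StudentComplete M) (hcc : (I17 nb1 nb2 K).CourseComplete M)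
    (i : Fin n2) (j : Fin n1)
    (hmem : (Sum.inl (i, 2), Sum.inr (Sum.inl j)) ∈ M) : False := by
  have hc : (Sum.inr (Sum.inl j) : C17 n1 n2) ∈ CM M (Sum.inl (i, 2)) := mem_CM.2 hmem
  by_cases hT : i ∈ T17 M
  · rw [CM3_of_memT hsc hT] at hc
    simp at hc
  · rw [CMe_of_notT hM hsc hcc hT] at hc
    simp at hc

/-- The graph matching extracted from a complete stable matching of `I17(G,K)`. -/
def fB (M : Finset (S17 n1 n2 K × C17 n1 n2)) (nb1 nb2 : Fin n2 → Fin n1) :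
    Fin n2 → Option (Fin n1) := fun i =>
  if (Sum.inl (i, 0) : S17 n1 n2 K) ∈ SM M (Sum.inr (Sum.inl (nb1 i))) then some (nb1 i)
  else if (Sum.inl (i, 1) : S17 n1 n2 K) ∈ SM M (Sum.inr (Sum.inl (nb2 i))) then some (nb2 i)
  else none

lemma fB_ne_none_iff (hM : (I17 nb1 nb2 K).IsMatching M)
    (hsc : (I17 nb1 nb2 K).StudentComplete M) (hcc : (I17 nb1 nb2 K).CourseComplete M)
    (i : Fin n2) : fB M nb1 nb2 i ≠ none ↔ i ∈ T17 M := by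
  constructor
  · intro h
    by_cases hb1 : (Sum.inl (i, 0) : S17 n1 n2 K) ∈ SM M (Sum.inr (Sum.inl (nb1 i)))
    · have hcm : (Sum.inr (Sum.inl (nb1 i)) : C17 n1 n2) ∈ CM M (Sum.inl (i, 0)) :=
        mem_CM.2 (mem_SM.1 hb1)
      have h1 : CM M (Sum.inl (i, 0)) =
          {Sum.inr (Sum.inl (nb1 i)), Sum.inr (Sum.inr 2)} := by
        rcases B1 hM hsc i with h' | h'
        · rw [h'] at hcm; simp at hcm
        · exact h'
      exact (T_of_s1pair hM hsc hcc h1).1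
    · by_cases hb2 : (Sum.inl (i, 1) : S17 n1 n2 K) ∈ SM M (Sum.inr (Sum.inl (nb2 i)))
      · have hcm : (Sum.inr (Sum.inl (nb2 i)) : C17 n1 n2) ∈ CM M (Sum.inl (i, 1)) :=
          mem_CM.2 (mem_SM.1 hb2)
        have h2 : CM M (Sum.inl (i, 1)) =
            {Sum.inr (Sum.inl (nb2 i)), Sum.inr (Sum.inr 2)} := by
          rcases B2 hM hsc i with h' | h' | h'
          · rw [h'] at hcm; simp at hcm
          · rw [h'] at hcm; simp at hcm
          · exact h'
        exact (T_of_s2pair hM hsc hcc h2).1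
      · exact absurd (by simp [fB, hb1, hb2]) h
  · intro hT
    rcases struct_of_T hM hsc hcc hT with ⟨h1, h2⟩ | ⟨h1, h2⟩
    · have hb1 : (Sum.inl (i, 0) : S17 n1 n2 K) ∈ SM M (Sum.inr (Sum.inl (nb1 i))) :=
        mem_SM.2 (mem_CM.1 (by rw [h1]; simp))
      simp [fB, hb1]
    · have hb1 : (Sum.inl (i, 0) : S17 n1 n2 K) ∉ SM M (Sum.inr (Sum.inl (nb1 i))) := by
        intro hmem
        have h3 := mem_CM.2 (mem_SM.1 hmem)
        rw [h1] at h3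
        simp at h3
      have hb2 : (Sum.inl (i, 1) : S17 n1 n2 K) ∈ SM M (Sum.inr (Sum.inl (nb2 i))) :=
        mem_SM.2 (mem_CM.1 (by rw [h2]; simp))
      simp [fB, hb1, hb2]

lemma mem_of_fB {i : Fin n2} {j : Fin n1} (h : fB M nb1 nb2 i = some j) :
    ∃ t : Fin 3, t ≠ 2 ∧ (Sum.inl (i, t) : S17 n1 n2 K) ∈ SM M (Sum.inr (Sum.inl j)) := by
  rw [fB] at h
  split_ifs at h with hb1 hb2
  · obtain rfl : nb1 i = j := Option.some.inj h
    exact ⟨0, by decide, hb1⟩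
  · obtain rfl : nb2 i = j := Option.some.inj h
    exact ⟨1, by decide, hb2⟩

/-- The backward direction: from a complete pair-size-stable matching of `I17(G,K)`
to a maximal matching of size `K`. -/
lemma backward17 {n1 n2 K : ℕ} {nb1 nb2 : Fin n2 → Fin n1}
    {M : Finset (S17 n1 n2 K × C17 n1 n2)}
    (hM : (I17 nb1 nb2 K).IsMatching M) (hsc : (I17 nb1 nb2 K).StudentComplete M)
    (hcc : (I17 nb1 nb2 K).CourseComplete M)
    (hstab : (I17 nb1 nb2 K).PairSizeStable noF M) :
    ∃ f, GMaximal nb1 nb2 f ∧ GSize f = K := by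
  refine ⟨fB M nb1 nb2, ⟨⟨?_, ?_⟩, ?_⟩, ?_⟩
  · -- edges exist
    intro i j h
    rw [fB] at h
    split_ifs at h with hb1 hb2
    · exact Or.inl (Option.some.inj h).symm
    · exact Or.inr (Option.some.inj h).symm
  · -- matching (injectivity)
    intro i i' j h h'
    obtain ⟨t, ht, hmem⟩ := mem_of_fB h
    obtain ⟨t', ht', hmem'⟩ := mem_of_fB h'
    obtain ⟨sx, hsx⟩ := Finset.card_eq_one.1 (hcc (Sum.inr (Sum.inl j)))
    rw [hsx, Finset.mem_singleton] at hmem hmem'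
    have h2 := hmem.trans hmem'.symm
    simp at h2
    exact h2.1
  · -- maximality
    intro i hnone j hj
    have hiT : i ∉ T17 M := fun hT => ((fB_ne_none_iff hM hsc hcc i).2 hT) hnone
    have hCM3 := CMe_of_notT hM hsc hcc hiT
    by_contra hno
    push_neg at hno
    obtain ⟨sx, hsx⟩ := Finset.card_eq_one.1 (hcc (Sum.inr (Sum.inl j)))
    have hmemx : sx ∈ SM M (Sum.inr (Sum.inl j)) := hsx ▸ Finset.mem_singleton_self _
    have hacc : acc17 nb1 nb2 sx (Sum.inr (Sum.inl j)) := hM.1 _ (mem_SM.1 hmemx)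
    rcases sx with ⟨i'', t⟩ | k
    · induction t using fin3cases
      · simp [acc17] at hacc
        subst hacc
        have hcm : (Sum.inr (Sum.inl (nb1 i'')) : C17 n1 n2) ∈ CM M (Sum.inl (i'', 0)) :=
          mem_CM.2 (mem_SM.1 hmemx)
        have h1 : CM M (Sum.inl (i'', 0)) =
            {Sum.inr (Sum.inl (nb1 i'')), Sum.inr (Sum.inr 2)} := by
          rcases B1 hM hsc i'' with h' | h'
          · rw [h'] at hcm; simp at hcm
          · exact h'
        have hb1 : (Sum.inl (i'', 0) : S17 n1 n2 K) ∈ SM M (Sum.inr (Sum.inl (nb1 i''))) :=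
          mem_SM.2 (mem_CM.1 (by rw [h1]; simp))
        exact hno i'' (by simp [fB, hb1])
      · simp [acc17] at hacc
        subst hacc
        have hcm : (Sum.inr (Sum.inl (nb2 i'')) : C17 n1 n2) ∈ CM M (Sum.inl (i'', 1)) :=
          mem_CM.2 (mem_SM.1 hmemx)
        have h2 : CM M (Sum.inl (i'', 1)) =
            {Sum.inr (Sum.inl (nb2 i'')), Sum.inr (Sum.inr 2)} := by
          rcases B2 hM hsc i'' with h' | h' | h'
          · rw [h'] at hcm; simp at hcm
          · rw [h'] at hcm; simp at hcm
          · exact h'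
        have h1' := (T_of_s2pair hM hsc hcc h2).2
        have hb1 : (Sum.inl (i'', 0) : S17 n1 n2 K) ∉ SM M (Sum.inr (Sum.inl (nb1 i''))) := by
          intro hmem
          have h3 := mem_CM.2 (mem_SM.1 hmem)
          rw [h1'] at h3
          simp at h3
        have hb2 : (Sum.inl (i'', 1) : S17 n1 n2 K) ∈ SM M (Sum.inr (Sum.inl (nb2 i''))) :=
          mem_SM.2 (mem_CM.1 (by rw [h2]; simp))
        exact hno i'' (by simp [fB, hb1, hb2])
      · exact no_s3_c hM hsc hcc i'' j (mem_SM.1 hmemx)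
    · -- the occupant is a p-student : blocking pair
      refine hstab (Sum.inl (i, 2)) (Sum.inr (Sum.inl j))
        ⟨?_, ?_, ?_, {Sum.inr (Sum.inr 1)}, ?_, ?_, ?_, ?_, ?_⟩
      · show acc17 (K := K) nb1 nb2 (Sum.inl (i, 2)) (Sum.inr (Sum.inl j))
        simpa [acc17] using hj
      · intro hmem
        have h3 := mem_CM.2 hmem
        rw [hCM3] at h3
        simp at h3
      · right
        refine ⟨Sum.inr k, hmemx, cPref_of_mrank ?_ ?_ ?_⟩
        · simpa [acc17] using hj
        · trivial
        · rw [mrank_s3, mrank_p]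
          have := i.isLt
          omega
      · intro z hz
        rw [Finset.mem_singleton] at hz
        subst hz
        rw [hCM3]
        simp
      · intro c' hc'
        rw [Finset.mem_singleton] at hc'
        subst hc'
        refine sPref_of_srank (by simpa [acc17] using hj) (by simp [acc17]) ?_
        show srank17 nb1 nb2 (Sum.inl (i, 2)) (Sum.inr (Sum.inl j)) <
          srank17 nb1 nb2 (Sum.inl (i, 2)) (Sum.inr (Sum.inr 1))
        simp only [srank17]
        split_ifs <;> norm_num
      · rw [O_singleton]
        norm_num [I17_credits, credits17]
      · rw [hsc _, O_singleton]
        norm_num [I17_credits, I17_limit, credits17, limit17]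
      · exact Set.mem_univ _
  · -- size
    rw [GSize]
    have he : (univ.filter fun i => fB M nb1 nb2 i ≠ none) = T17 M := by
      ext i
      simp only [Finset.mem_filter, Finset.mem_univ, true_and]
      exact fB_ne_none_iff hM hsc hcc i
    rw [he]
    exact cardT17 hM hsc hcc

end Backward2

/-- `G` has a maximal matching of size exactly `K` iff `I17(G,K)`
admits a student-complete pair-size-stable matching, and likewise iff `I17(G,K)`
admits a course-complete pair-size-stable matching. -/
theorem maximalMatching_eq_iff_complete_pairSizeStable
    {n1 n2 : ℕ} (nb1 nb2 : Fin n2 → Fin n1) (hnb : ∀ i, nb1 i < nb2 i)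
    (K : ℕ) (hK1 : K ≤ n1) (hK2 : K ≤ n2) :
    ((∃ f, GMaximal nb1 nb2 f ∧ GSize f = K) ↔
      ∃ M : Finset (S17 n1 n2 K × C17 n1 n2),
        (I17 nb1 nb2 K).IsMatching M ∧ (I17 nb1 nb2 K).StudentComplete M ∧
        (I17 nb1 nb2 K).PairSizeStable noF M) ∧
    ((∃ f, GMaximal nb1 nb2 f ∧ GSize f = K) ↔
      ∃ M : Finset (S17 n1 n2 K × C17 n1 n2),
        (I17 nb1 nb2 K).IsMatching M ∧ (I17 nb1 nb2 K).CourseComplete M ∧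
        (I17 nb1 nb2 K).PairSizeStable noF M) := by
  constructor
  · constructor
    · intro hex
      obtain ⟨M, h1, h2, h3, h4⟩ := forward17 hK2 hex
      exact ⟨M, h1, h2, h4⟩
    · rintro ⟨M, hM, hsc, hstab⟩
      exact backward17 hM hsc ((SC_iff_CC hK1 hK2 hM).1 hsc) hstab
  · constructor
    · intro hex
      obtain ⟨M, h1, h2, h3, h4⟩ := forward17 hK2 hex
      exact ⟨M, h1, h3, h4⟩
    · rintro ⟨M, hM, hcc, hstab⟩
      exact backward17 hM ((SC_iff_CC hK1 hK2 hM).2 hcc) hcc hstab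
end

section
/- With I(G,K) the CA-ML instance constructed from a bipartite graph G and integer K as described (the exact-maximal-matching construction), a matching in I(G,K) is course-complete if and only if it is student-complete. -/
open Finset

section CountingAux

variable {S C : Type*} [DecidableEq S] [DecidableEq C] [Fintype S] [Fintype C]

lemma O_CM_eq (I : CA S C) (M : Finset (S × C)) (s : S) :
    I.O (CM M s) = ∑ p ∈ M.filter (fun p => p.1 = s), I.credits p.2 := by
  rw [CA.O, CM, Finset.sum_image]
  intro p hp q hq h
  simp only [Finset.coe_filter, Finset.mem_coe, Finset.mem_filter, Set.mem_setOf_eq] at hp hq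
  exact Prod.ext (hp.2.trans hq.2.symm) h

lemma card_SM_eq (M : Finset (S × C)) (c : C) :
    (SM M c).card = (M.filter (fun p => p.2 = c)).card := by
  rw [SM]
  apply Finset.card_image_of_injOn
  intro p hp q hq h
  simp only [Finset.coe_filter, Set.mem_setOf_eq] at hp hq
  exact Prod.ext h (hp.2.trans hq.2.symm)

lemma double_count (I : CA S C) (M : Finset (S × C)) :
    ∑ s, I.O (CM M s) = ∑ c, I.credits c * ((SM M c).card : ℚ) := by
  have h1 : ∑ s, I.O (CM M s) = ∑ p ∈ M, I.credits p.2 := by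
    simp_rw [O_CM_eq]
    exact Finset.sum_fiberwise M (fun p => p.1) (fun p => I.credits p.2)
  have h2 : ∑ c, I.credits c * ((SM M c).card : ℚ) = ∑ p ∈ M, I.credits p.2 := by
    have hc : ∀ c, I.credits c * ((SM M c).card : ℚ)
        = ∑ p ∈ M.filter (fun p => p.2 = c), I.credits p.2 := by
      intro c
      have hcongr : ∑ p ∈ M.filter (fun p => p.2 = c), I.credits p.2
          = ∑ _p ∈ M.filter (fun p => p.2 = c), I.credits c :=
        Finset.sum_congr rfl fun p hp => by
          simp only [Finset.mem_filter] at hp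
          rw [hp.2]
      rw [card_SM_eq, hcongr, Finset.sum_const, nsmul_eq_mul, mul_comm]
    simp_rw [hc]
    exact Finset.sum_fiberwise M (fun p => p.2) (fun p => I.credits p.2)
  rw [h1, h2]

lemma cc_iff_sc (I : CA S C) (M : Finset (S × C)) (hM : I.IsMatching M)
    (hsum : ∑ s, I.limit s = ∑ c, I.credits c * (I.quota c : ℚ)) :
    I.CourseComplete M ↔ I.StudentComplete M := by
  obtain ⟨-, hlim, hquo⟩ := hM
  have hdc := double_count I M
  constructor
  · intro hcc
    have hs : ∑ s, I.O (CM M s) = ∑ s, I.limit s := by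
      rw [hdc, hsum]
      exact Finset.sum_congr rfl fun c _ => by rw [hcc c]
    intro s
    exact (Finset.sum_eq_sum_iff_of_le (fun s _ => hlim s)).mp hs s (Finset.mem_univ s)
  · intro hsc
    have hs : ∑ c, I.credits c * ((SM M c).card : ℚ)
        = ∑ c, I.credits c * (I.quota c : ℚ) := by
      rw [← hdc, ← hsum]
      exact Finset.sum_congr rfl fun s _ => hsc s
    intro c
    have hle : ∀ c ∈ Finset.univ (α := C),
        I.credits c * ((SM M c).card : ℚ) ≤ I.credits c * (I.quota c : ℚ) :=
      fun c _ => mul_le_mul_of_nonneg_left (by exact_mod_cast hquo c) (I.credits_pos c).le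
    have heq := (Finset.sum_eq_sum_iff_of_le hle).mp hs c (Finset.mem_univ c)
    have := mul_left_cancel₀ (ne_of_gt (I.credits_pos c)) heq
    exact_mod_cast this

end CountingAux

lemma I17_sum_eq {n1 n2 : ℕ} (K : ℕ) (hK1 : K ≤ n1) (hK2 : K ≤ n2) :
    ∑ s : S17 n1 n2 K, limit17 s
      = ∑ c : C17 n1 n2, credits17 c * ((quota17 K c : ℕ) : ℚ) := by
  rw [Fintype.sum_sum_type, Fintype.sum_sum_type, Fintype.sum_sum_type]
  simp only [limit17, credits17, quota17, Fin.sum_univ_three]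
  norm_num [Finset.sum_const, Fintype.card_prod, Fintype.card_fin]
  push_cast [Nat.cast_sub hK1, Nat.cast_sub hK2]
  ring

/-- In the exact-maximal-matching instance `I17(G,K)`, a matching is
course-complete iff it is student-complete. -/
theorem I17_courseComplete_iff_studentComplete
    {n1 n2 : ℕ} (nb1 nb2 : Fin n2 → Fin n1) (hnb : ∀ i, nb1 i < nb2 i)
    (K : ℕ) (hK1 : K ≤ n1) (hK2 : K ≤ n2)
    (M : Finset (S17 n1 n2 K × C17 n1 n2)) (hM : (I17 nb1 nb2 K).IsMatching M) :
    (I17 nb1 nb2 K).CourseComplete M ↔ (I17 nb1 nb2 K).StudentComplete M := by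
  exact cc_iff_sc _ M hM (I17_sum_eq K hK1 hK2)
end
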